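/- arXiv:1312.1701 — 9 statements merged into one kernel-verified Lean document; each statement's English description precedes it below -/
import Mathlib

section
/- If Y is a dense subspace of a Tychonoff space X and F is a closed remote subset of βX, then the preimage of F under the canonical map βY → βX is a remote closed subset of βY. -/
open TopologicalSpace

/-- A closed set `F ⊆ βX` is remote if it is disjoint from `cl_{βX} N` for every
nowhere dense `N ⊆ X`. -/
def IsRemoteSet (X : Type*) [TopologicalSpace X] (F : Set (StoneCech X)) : Prop :=
  ∀ N : Set X, interior (closure N) = ∅ →
    F ∩ closure (stoneCechUnit '' N) = ∅

/-- If `Y` is a dense subspace of a Tychonoff space `X` and `F` is a closed remote subset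
of `βX`, then the preimage of `F` under the canonical map `βY → βX` is a remote closed
subset of `βY`. -/
theorem preimage_of_remote_is_remote
    (X : Type*) [TopologicalSpace X] [T35Space X]
    (Y : Set X) (hY : Dense Y)
    (f : StoneCech Y → StoneCech X)
    (hf : f = stoneCechExtend
      (show Continuous (fun y : Y => stoneCechUnit (y : X)) from
        continuous_stoneCechUnit.comp continuous_subtype_val))
    (F : Set (StoneCech X)) (hFc : IsClosed F) (hFr : IsRemoteSet X F) :
    IsClosed (f ⁻¹' F) ∧ IsRemoteSet Y (f ⁻¹' F) := by
  have hfc : Continuous f := by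
    rw [hf]; exact continuous_stoneCechExtend _
  refine ⟨hFc.preimage hfc, ?_⟩
  intro N hN
  -- M is N viewed as a subset of X
  set M : Set X := Subtype.val '' N with hM
  -- M is nowhere dense in X
  have hMnd : interior (closure M) = (∅ : Set X) := by
    by_contra h
    obtain ⟨x, hx⟩ := Set.nonempty_iff_ne_empty.mpr h
    obtain ⟨y, hyU, hyY⟩ := hY.inter_open_nonempty _ isOpen_interior ⟨x, hx⟩
    set z : Y := ⟨y, hyY⟩
    have hopen : IsOpen ((Subtype.val : Y → X) ⁻¹' interior (closure M)) :=
      isOpen_interior.preimage continuous_subtype_val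
    have hsub : ((Subtype.val : Y → X) ⁻¹' interior (closure M)) ⊆ closure N := by
      intro w hw
      have : (w : X) ∈ closure M := interior_subset hw
      exact closure_subtype.mpr this
    have : z ∈ interior (closure N) :=
      interior_maximal hsub hopen hyU
    rw [hN] at this
    exact this
  have hdisj := hFr M hMnd
  ext z
  simp only [Set.mem_inter_iff, Set.mem_preimage, Set.mem_empty_iff_false, iff_false]
  rintro ⟨hzF, hzcl⟩
  have hmap : f '' (stoneCechUnit '' N) = stoneCechUnit '' M := by
    rw [hM, Set.image_image, Set.image_image]
    refine Set.image_congr fun y _ => ?_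
    rw [hf]
    exact congrFun (stoneCechExtend_extends _) y
  have : f z ∈ closure (stoneCechUnit '' M) := by
    rw [← hmap]
    exact (Continuous.closure_preimage_subset hfc _)
      (closure_mono (Set.subset_preimage_image f _) hzcl)
  have : f z ∈ F ∩ closure (stoneCechUnit '' M) := ⟨hzF, this⟩
  rw [hdisj] at this
  exact this
end

section
/- If Y is a dense subspace of a Tychonoff space X, then re(Y) ≤ re(X), where re(Z) denotes the minimal character of a nonempty closed remote subset of βZ (and ∞ if none exists). -/
open TopologicalSpace Cardinal

/-- A nowhere dense subset of a dense subspace is nowhere dense in the ambient space. -/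
lemma nwd_of_nwd_dense {X : Type*} [TopologicalSpace X] {Y : Set X} (hY : Dense Y)
    (N : Set Y) (hN : interior (closure N) = ∅) :
    interior (closure (Subtype.val '' N)) = ∅ := by
  by_contra h
  obtain ⟨x, hx⟩ := Set.nonempty_iff_ne_empty.2 h
  obtain ⟨y, hyY, hyU⟩ := hY.exists_mem_open isOpen_interior ⟨x, hx⟩
  have : (⟨y, hyY⟩ : Y) ∈ interior (closure N) := by
    apply mem_interior_iff_mem_nhds.2
    have hU : IsOpen ((Subtype.val : Y → X) ⁻¹' interior (closure (Subtype.val '' N))) :=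
      isOpen_interior.preimage continuous_subtype_val
    refine Filter.mem_of_superset (hU.mem_nhds (by exact hyU)) ?_
    intro z hz
    exact closure_subtype.2 (interior_subset hz)
  rw [hN] at this
  exact this

/-- If `Y` is a dense subspace of a Tychonoff space `X`, then `re(Y) ≤ re(X)`:
for every nonempty closed remote subset `F` of `βX` and every family `𝒰` of open
sets of `βX` intersecting to `F`, there is a nonempty closed remote subset `G` of
`βY` together with a family of open sets of `βY` intersecting to `G` of cardinality
at most that of `𝒰`.  (If `X` has no remote set, i.e. `re(X) = ∞`, this is vacuous.) -/
theorem re_dense_subspace_le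
    (X : Type*) [TopologicalSpace X] [T35Space X]
    (Y : Set X) (hY : Dense Y)
    (F : Set (StoneCech X)) (hFne : F.Nonempty) (hFc : IsClosed F)
    (hFr : IsRemoteSet X F)
    (𝒰 : Set (Set (StoneCech X))) (h𝒰o : ∀ U ∈ 𝒰, IsOpen U ∧ F ⊆ U)
    (h𝒰 : F = ⋂₀ 𝒰) :
    ∃ G : Set (StoneCech Y), G.Nonempty ∧ IsClosed G ∧ IsRemoteSet Y G ∧
      ∃ 𝒱 : Set (Set (StoneCech Y)), (∀ V ∈ 𝒱, IsOpen V ∧ G ⊆ V) ∧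
        G = ⋂₀ 𝒱 ∧ #𝒱 ≤ #𝒰 := by
  -- the canonical map βY → βX
  have hg : Continuous (stoneCechUnit ∘ (Subtype.val : Y → X)) :=
    continuous_stoneCechUnit.comp continuous_subtype_val
  set f : StoneCech Y → StoneCech X := stoneCechExtend hg with hf_def
  have hfc : Continuous f := continuous_stoneCechExtend hg
  have hfe : f ∘ stoneCechUnit = stoneCechUnit ∘ (Subtype.val : Y → X) :=
    stoneCechExtend_extends hg
  -- f is surjective
  have hfsurj : Function.Surjective f := by
    have hcl : IsClosed (Set.range f) := (isCompact_range hfc).isClosed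
    have hdense : Dense (Set.range f) := by
      have h1 : Set.range (stoneCechUnit ∘ (Subtype.val : Y → X)) ⊆ Set.range f := by
        rw [← hfe]; exact Set.range_comp_subset_range _ _
      have h2 : Dense (Set.range (stoneCechUnit ∘ (Subtype.val : Y → X))) :=
        (denseRange_stoneCechUnit (α := X)).comp (hY.denseRange_val)
          continuous_stoneCechUnit
      exact h2.mono h1
    intro x
    have : x ∈ Set.range f := by
      have := hdense x
      rwa [hcl.closure_eq] at this
    exact this
  refine ⟨f ⁻¹' F, ?_, hFc.preimage hfc, ?_, (fun U => f ⁻¹' U) '' 𝒰, ?_, ?_, Cardinal.mk_image_le⟩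
  · obtain ⟨x, hx⟩ := hFne
    obtain ⟨p, rfl⟩ := hfsurj x
    exact ⟨p, hx⟩
  · -- remoteness
    intro N hN
    have hN' := nwd_of_nwd_dense hY N hN
    have := hFr (Subtype.val '' N) hN'
    rw [Set.eq_empty_iff_forall_notMem] at this ⊢
    intro p ⟨hpF, hpcl⟩
    apply this (f p)
    refine ⟨hpF, ?_⟩
    have : f '' closure (stoneCechUnit '' N) ⊆ closure (f '' (stoneCechUnit '' N)) :=
      image_closure_subset_closure_image hfc
    have h2 : f '' (stoneCechUnit '' N) = stoneCechUnit '' (Subtype.val '' N) := by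
      rw [← Set.image_comp, hfe, Set.image_comp]
    exact h2 ▸ this ⟨p, hpcl, rfl⟩
  · rintro V ⟨U, hU, rfl⟩
    exact ⟨(h𝒰o U hU).1.preimage hfc, fun p hp => (h𝒰o U hU).2 hp⟩
  · rw [h𝒰, Set.sInter_image, Set.preimage_sInter]
end

section
/- Let X be a non-compact, crowded, separable metrizable space and F a nonempty closed remote subset of βX. Then χ(F) ≥ cov(M). -/
open TopologicalSpace Cardinal

/-- The covering number `cov(M)` of the meager ideal on Baire space `ω^ω`: the least
number of meager sets needed to cover `ω^ω`. -/
noncomputable def covMeager : Cardinal :=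
  sInf { c | ∃ G : Set (Set (ℕ → ℕ)), (∀ A ∈ G, IsMeagre A) ∧
      ⋃₀ G = Set.univ ∧ #G = c }

universe u

namespace CovMeagerAux

open Filter Set Metric

variable {X : Type u} [MetricSpace X]

/-- The canonical continuous surjection from ultrafilters on `X` to `βX`. -/
noncomputable def ucast (G : Ultrafilter X) : StoneCech X :=
  T2Quotient.mk (Quot.mk _ G : PreStoneCech X)

lemma continuous_ucast : Continuous (ucast : Ultrafilter X → StoneCech X) :=
  (T2Quotient.continuous_mk (X := PreStoneCech X)).comp continuous_quot_mk

lemma ucast_surjective : Function.Surjective (ucast : Ultrafilter X → StoneCech X) := by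
  intro p
  obtain ⟨q, rfl⟩ := T2Quotient.surjective_mk (X := PreStoneCech X) p
  obtain ⟨G, rfl⟩ := Quot.mk_surjective q
  exact ⟨G, rfl⟩

lemma ucast_pure (x : X) : ucast (pure x : Ultrafilter X) = stoneCechUnit x := rfl

/-- If `V` is an open neighbourhood of `ucast G` then its trace on `X` belongs to `G`. -/
lemma preimage_mem_of_ucast_mem (G : Ultrafilter X) {V : Set (StoneCech X)}
    (hV : IsOpen V) (hGV : ucast G ∈ V) : stoneCechUnit ⁻¹' V ∈ G := by
  have hW : IsOpen (ucast ⁻¹' V : Set (Ultrafilter X)) := hV.preimage continuous_ucast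
  obtain ⟨t, ht, hGt, hsub⟩ :=
    ultrafilterBasis_is_basis.exists_subset_of_mem_open (show G ∈ ucast ⁻¹' V from hGV) hW
  obtain ⟨s, rfl⟩ := ht
  refine mem_of_superset hGt fun x hx => ?_
  have hpure : (pure x : Ultrafilter X) ∈ {u : Ultrafilter X | s ∈ u} := by
    simpa using hx
  have := hsub hpure
  simpa [ucast_pure] using this

/-- If `A ∈ G` then `ucast G` lies in the closure of the image of `A`. -/
lemma ucast_mem_closure_image (G : Ultrafilter X) {A : Set X} (hA : A ∈ G) :
    ucast G ∈ closure (stoneCechUnit '' A) := by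
  by_contra h
  have hV : IsOpen (closure (stoneCechUnit '' A))ᶜ := isClosed_closure.isOpen_compl
  have hmem := preimage_mem_of_ucast_mem G hV h
  obtain ⟨x, hxA, hx⟩ := Ultrafilter.nonempty_of_mem (inter_mem hA hmem)
  exact hx (subset_closure (mem_image_of_mem _ hxA))

variable [SeparableSpace X] [Nonempty X]

open Classical in
/-- The generic construction: from `f : ℕ → ℕ` we build an increasing list of
(point, radius) pairs.  At stage `n` the pair coded by `f n` is appended iff the doubled
closed ball is `G`-small and the new ball is strictly separated from all earlier ones. -/
noncomputable def stepL (G : Ultrafilter X) (f : ℕ → ℕ) : ℕ → List (X × ℝ)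
  | 0 => []
  | n + 1 =>
    let L := stepL G f n
    let y := denseSeq X (f n).unpair.1
    let ε : ℝ := (1 / 2) ^ (f n).unpair.2
    if (Metric.closedBall y (2 * ε) ∉ G) ∧ ∀ p ∈ L, p.2 + ε < dist p.1 y then
      L ++ [(y, ε)] else L

/-- The set of points chosen along the construction. -/
def Pts (G : Ultrafilter X) (f : ℕ → ℕ) : Set X := {x | ∃ n ε, (x, ε) ∈ stepL G f n}

lemma stepL_mono_succ (G : Ultrafilter X) (f : ℕ → ℕ) (n : ℕ) {p : X × ℝ}
    (hp : p ∈ stepL G f n) : p ∈ stepL G f (n + 1) := by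
  classical
  rw [stepL]
  split_ifs with h
  · exact List.mem_append_left _ hp
  · exact hp

lemma stepL_mono (G : Ultrafilter X) (f : ℕ → ℕ) {m n : ℕ} (hmn : m ≤ n) {p : X × ℝ}
    (hp : p ∈ stepL G f m) : p ∈ stepL G f n := by
  induction n with
  | zero =>
    have : m = 0 := Nat.le_zero.mp hmn
    simpa [this] using hp
  | succ n ih =>
    rcases Nat.lt_or_ge m (n + 1) with h | h
    · exact stepL_mono_succ G f n (ih (by omega))
    · have : m = n + 1 := by omega
      simpa [← this] using hp

/-- Invariant of the construction. -/
lemma stepL_inv (G : Ultrafilter X) (f : ℕ → ℕ) (n : ℕ) :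
    (∀ p ∈ stepL G f n, 0 < p.2 ∧ Metric.closedBall p.1 (2 * p.2) ∉ G) ∧
      List.Pairwise (fun p q : X × ℝ => p.2 + q.2 < dist p.1 q.1) (stepL G f n) := by
  classical
  induction n with
  | zero => simp [stepL]
  | succ n ih =>
    rw [stepL]
    split_ifs with h
    · constructor
      · intro p hp
        rcases List.mem_append.1 hp with hp | hp
        · exact ih.1 p hp
        · rcases List.mem_singleton.1 hp with rfl
          exact ⟨by positivity, h.1⟩
      · rw [List.pairwise_append]
        refine ⟨ih.2, List.pairwise_singleton _ _, ?_⟩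
        intro p hp q hq
        rcases List.mem_singleton.1 hq with rfl
        exact h.2 p hp
    · exact ih

lemma stepL_congr (G : Ultrafilter X) {f g : ℕ → ℕ} :
    ∀ n : ℕ, (∀ i < n, f i = g i) → stepL G f n = stepL G g n := by
  intro n
  induction n with
  | zero => intro _; rfl
  | succ n ih =>
    intro h
    have h1 : stepL G f n = stepL G g n := ih fun i hi => h i (by omega)
    have h2 : f n = g n := h n (by omega)
    rw [stepL, stepL, h1, h2]

/-- The set of `f` whose associated point set hits `A`. -/
def hitSet (G : Ultrafilter X) (A : Set X) : Set (ℕ → ℕ) :=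
  {f | ∃ n, ∃ p ∈ stepL G f n, p.1 ∈ A}

lemma isOpen_hitSet (G : Ultrafilter X) (A : Set X) : IsOpen (hitSet G A) := by
  rw [isOpen_iff_forall_mem_open]
  rintro f ⟨n, p, hp, hpA⟩
  refine ⟨⋂ i ∈ Finset.range n, (fun g : ℕ → ℕ => g i) ⁻¹' {f i}, ?_, ?_, ?_⟩
  · intro g hg
    simp only [Set.mem_iInter, Set.mem_preimage, Set.mem_singleton_iff] at hg
    have hstep : stepL G f n = stepL G g n :=
      stepL_congr G n fun i hi => (hg i (Finset.mem_range.2 hi)).symm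
    exact ⟨n, p, hstep ▸ hp, hpA⟩
  · exact isOpen_biInter_finset fun i _ =>
      (IsOpen.preimage (continuous_apply i) (isOpen_discrete _))
  · simp

private lemma list_min {α : Type*} (u : α → ℝ) :
    ∀ L : List α, (∀ a ∈ L, 0 < u a) → ∃ c > 0, ∀ a ∈ L, c ≤ u a := by
  intro L
  induction L with
  | nil => exact fun _ => ⟨1, one_pos, by simp⟩
  | cons a L ih =>
    intro h
    obtain ⟨c, hc, hcle⟩ := ih fun b hb => h b (List.mem_cons_of_mem _ hb)
    refine ⟨min c (u a), lt_min hc (h a List.mem_cons_self), ?_⟩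
    intro b hb
    rcases List.mem_cons.1 hb with rfl | hb
    · exact min_le_right _ _
    · exact le_trans (min_le_left _ _) (hcle b hb)

/-- Core density step: given a finite admissible configuration `L` and an open `G`-large
set `A`, there is an admissible new pair whose point lies in `A`. -/
lemma exists_candidate (G : Ultrafilter X) (hG1 : ∀ x : X, {x} ∉ G) {A : Set X}
    (hAo : IsOpen A) (hAG : A ∈ G) (L : List (X × ℝ))
    (hL : ∀ p ∈ L, 0 < p.2 ∧ Metric.closedBall p.1 (2 * p.2) ∉ G) :
    ∃ k m : ℕ, denseSeq X k ∈ A ∧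
      Metric.closedBall (denseSeq X k) (2 * ((1 / 2 : ℝ) ^ m)) ∉ G ∧
      ∀ p ∈ L, p.2 + (1 / 2 : ℝ) ^ m < dist p.1 (denseSeq X k) := by
  classical
  set Γ : Set X := ⋃ p ∈ {q : X × ℝ | q ∈ L}, Metric.closedBall p.1 (2 * p.2) with hΓdef
  have hΓ : Γ ∉ G := by
    intro h
    obtain ⟨p, hpL, hp⟩ := (Ultrafilter.finite_biUnion_mem_iff L.finite_toSet).1 h
    exact (hL p hpL).2 hp
  have hE : A ∩ Γᶜ ∈ G := inter_mem hAG (Ultrafilter.compl_mem_iff_notMem.2 hΓ)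
  have h2 : ∃ x₁ ∈ A ∩ Γᶜ, ∃ x₂ ∈ A ∩ Γᶜ, x₁ ≠ x₂ := by
    by_contra h
    push_neg at h
    obtain ⟨x₀, hx₀⟩ := Ultrafilter.nonempty_of_mem hE
    exact hG1 x₀ (mem_of_superset hE fun y hy => h y hy x₀ hx₀)
  obtain ⟨x₁, hx₁, x₂, hx₂, hne⟩ := h2
  have hball : ∃ x ∈ A ∩ Γᶜ, ∃ r > 0, Metric.closedBall x r ∉ G := by
    by_cases hb : ∃ r > 0, Metric.closedBall x₁ r ∉ G
    · exact ⟨x₁, hx₁, hb⟩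
    · push_neg at hb
      have hd : 0 < dist x₁ x₂ := dist_pos.2 hne
      refine ⟨x₂, hx₂, dist x₁ x₂ / 3, by linarith, ?_⟩
      intro h2'
      have h1' := hb (dist x₁ x₂ / 3) (by linarith)
      obtain ⟨z, hz1, hz2⟩ := Ultrafilter.nonempty_of_mem (inter_mem h1' h2')
      have e1 : dist z x₁ ≤ dist x₁ x₂ / 3 := Metric.mem_closedBall.1 hz1
      have e2 : dist z x₂ ≤ dist x₁ x₂ / 3 := Metric.mem_closedBall.1 hz2
      have t1 : dist x₁ x₂ ≤ dist x₁ z + dist z x₂ := dist_triangle _ _ _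
      have t2 : dist x₁ z = dist z x₁ := dist_comm _ _
      linarith
  obtain ⟨x, ⟨hxA, hxΓ⟩, r, hr, hrG⟩ := hball
  have hgap : ∀ p ∈ L, 2 * p.2 < dist x p.1 := by
    intro p hp
    have hnot : x ∉ Metric.closedBall p.1 (2 * p.2) := fun hmem =>
      hxΓ (Set.mem_biUnion hp hmem)
    have := Metric.mem_closedBall.not.1 hnot
    linarith [not_le.1 this]
  obtain ⟨ρ, hρ, hρA⟩ := Metric.isOpen_iff.1 hAo x hxA
  obtain ⟨c, hc, hcle⟩ := list_min (fun p : X × ℝ => dist x p.1 - 2 * p.2) L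
    (fun p hp => by have := hgap p hp; linarith)
  set c' : ℝ := min (min (r / 4) ρ) (c / 2) with hc'def
  have hc' : 0 < c' := lt_min (lt_min (by linarith) hρ) (by linarith)
  obtain ⟨m, hm⟩ := exists_pow_lt_of_lt_one hc' (by norm_num : (1 : ℝ) / 2 < 1)
  have hε : (0 : ℝ) < (1 / 2 : ℝ) ^ m := by positivity
  obtain ⟨k, hk⟩ := (denseRange_denseSeq X).exists_mem_open Metric.isOpen_ball
    ⟨x, Metric.mem_ball_self hε⟩
  set ε : ℝ := (1 / 2 : ℝ) ^ m with hεdef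
  set y := denseSeq X k with hydef
  have hyx : dist y x < ε := Metric.mem_ball.1 hk
  have hεr : ε < r / 4 := lt_of_lt_of_le hm (le_trans (min_le_left _ _) (min_le_left _ _))
  have hερ : ε < ρ := lt_of_lt_of_le hm (le_trans (min_le_left _ _) (min_le_right _ _))
  have hεc : 2 * ε < c := by
    have := lt_of_lt_of_le hm (min_le_right _ _)
    linarith
  refine ⟨k, m, ?_, ?_, ?_⟩
  · exact hρA (Metric.mem_ball.2 (by linarith))
  · intro hmem
    apply hrG
    refine mem_of_superset hmem fun z hz => ?_
    have hz1 : dist z y ≤ 2 * ε := Metric.mem_closedBall.1 hz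
    have t1 : dist z x ≤ dist z y + dist y x := dist_triangle _ _ _
    exact Metric.mem_closedBall.2 (by linarith)
  · intro p hp
    have h1 : c ≤ dist x p.1 - 2 * p.2 := hcle p hp
    have hp2 : 0 < p.2 := (hL p hp).1
    have t1 : dist p.1 x ≤ dist p.1 y + dist y x := dist_triangle _ _ _
    have t2 : dist p.1 x = dist x p.1 := dist_comm _ _
    linarith

lemma dense_hitSet (G : Ultrafilter X) (hG1 : ∀ x : X, {x} ∉ G) {A : Set X}
    (hAo : IsOpen A) (hAG : A ∈ G) : Dense (hitSet G A) := by
  classical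
  rw [dense_iff_inter_open]
  intro U hU hUne
  obtain ⟨f, hf⟩ := hUne
  obtain ⟨I, v, hv, hsub⟩ := isOpen_pi_iff.1 hU f hf
  set n : ℕ := I.sup id + 1 with hn
  have hIn : ∀ i ∈ I, i < n := fun i hi => Nat.lt_succ_of_le (Finset.le_sup (f := id) hi)
  obtain ⟨k, m, hyA, hsmall, hsep⟩ := exists_candidate G hG1 hAo hAG (stepL G f n)
    (fun p hp => (stepL_inv G f n).1 p hp)
  set g : ℕ → ℕ := Function.update f n (Nat.pair k m) with hg
  have hgf : ∀ i, i ≠ n → g i = f i := fun i hi => Function.update_of_ne hi _ _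
  have hstep : stepL G g n = stepL G f n :=
    stepL_congr G n fun i hi => (hgf i (by omega))
  have hgU : g ∈ U := by
    apply hsub
    intro i hi
    rw [hgf i (by have := hIn i hi; omega)]
    exact (hv i hi).2
  have hgn : g n = Nat.pair k m := Function.update_self _ _ _
  have hkept : (denseSeq X k, (1 / 2 : ℝ) ^ m) ∈ stepL G g (n + 1) := by
    rw [stepL]
    simp only [hgn, Nat.unpair_pair]
    rw [hstep]
    split_ifs with h
    · exact List.mem_append_right _ (List.mem_singleton.2 rfl)
    · exact absurd ⟨hsmall, hsep⟩ h
  exact ⟨g, hgU, n + 1, _, hkept, hyA⟩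

/-- The chosen point set is nowhere dense (crowdedness of `X` is used here). -/
lemma pts_nwd (hcr : ∀ x : X, ¬ IsOpen ({x} : Set X)) (G : Ultrafilter X) (f : ℕ → ℕ) :
    interior (closure (Pts G f)) = ∅ := by
  by_contra h
  obtain ⟨x₀, hx₀⟩ := Set.nonempty_iff_ne_empty.2 h
  have hx₀cl : x₀ ∈ closure (Pts G f) := interior_subset hx₀
  obtain ⟨y, hyO, hyP⟩ := (_root_.mem_closure_iff.1 hx₀cl) _ isOpen_interior hx₀
  obtain ⟨n, ε, hmem⟩ := hyP
  have hε : 0 < ε := ((stepL_inv G f n).1 _ hmem).1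
  have key : interior (closure (Pts G f)) ∩ Metric.ball y ε = {y} := by
    apply Set.eq_singleton_iff_unique_mem.2
    refine ⟨⟨hyO, Metric.mem_ball_self hε⟩, ?_⟩
    rintro w ⟨hwO, hwb⟩
    by_contra hw
    have hwy : 0 < dist w y := dist_pos.2 hw
    have hwε : dist w y < ε := Metric.mem_ball.1 hwb
    set r : ℝ := min (ε - dist w y) (dist w y) with hrdef
    have hr : 0 < r := lt_min (by linarith) hwy
    have hwcl : w ∈ closure (Pts G f) := interior_subset hwO
    obtain ⟨z, hzb, hzP⟩ := (_root_.mem_closure_iff.1 hwcl) _ Metric.isOpen_ball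
      (Metric.mem_ball_self hr)
    obtain ⟨n', ε', hz⟩ := hzP
    have hzy : z ≠ y := by
      rintro rfl
      have h1 : dist z w < r := Metric.mem_ball.1 hzb
      have h2 : r ≤ dist w z := min_le_right _ _
      rw [dist_comm] at h1
      exact absurd (h1.trans_le h2) (lt_irrefl _)
    have hmem' : (y, ε) ∈ stepL G f (max n n') := stepL_mono G f (le_max_left _ _) hmem
    have hz' : (z, ε') ∈ stepL G f (max n n') := stepL_mono G f (le_max_right _ _) hz
    have hpair := (stepL_inv G f (max n n')).2
    have hsym : Symmetric (fun p q : X × ℝ => p.2 + q.2 < dist p.1 q.1) := by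
      intro p q hpq
      have hpq' : p.2 + q.2 < dist p.1 q.1 := hpq
      show q.2 + p.2 < dist q.1 p.1
      rw [dist_comm]
      linarith
    have hne' : (y, ε) ≠ (z, ε') := fun hEq => hzy (congrArg Prod.fst hEq).symm
    haveI : Std.Symm (fun p q : X × ℝ => p.2 + q.2 < dist p.1 q.1) := ⟨fun a b h => hsym h⟩
    have hrel := hpair.forall hmem' hz' hne'
    have hε' : 0 < ε' := ((stepL_inv G f (max n n')).1 _ hz').1
    have ht : dist y z ≤ dist y w + dist w z := dist_triangle _ _ _
    have hzw : dist z w < r := Metric.mem_ball.1 hzb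
    have h2 : r ≤ ε - dist w y := min_le_left _ _
    have h3 : dist w z = dist z w := dist_comm _ _
    have h4 : dist y w = dist w y := dist_comm _ _
    have hrel' : ε + ε' < dist y z := hrel
    linarith
  have : IsOpen ({y} : Set X) := by
    rw [← key]
    exact isOpen_interior.inter Metric.isOpen_ball
  exact hcr y this

end CovMeagerAux

/-- If `X` is a non-compact, crowded, separable metrizable space and `F` is a nonempty
closed remote subset of `βX`, then `χ(F) ≥ cov(M)`: every family of open subsets of
`βX` intersecting to `F` has cardinality at least `cov(M)`. -/
theorem character_of_remote_ge_covMeager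
    (X : Type u) [MetricSpace X] [SeparableSpace X]
    (hnc : ¬ CompactSpace X)
    (hcrowded : ∀ x : X, ¬ IsOpen ({x} : Set X))
    (F : Set (StoneCech X)) (hFne : F.Nonempty) (hFc : IsClosed F)
    (hFr : IsRemoteSet X F)
    (𝒰 : Set (Set (StoneCech X))) (h𝒰o : ∀ U ∈ 𝒰, IsOpen U)
    (h𝒰 : F = ⋂₀ 𝒰) :
    Cardinal.lift.{u} covMeager ≤ Cardinal.lift.{0} #𝒰 := by
  classical
  have hsing : ∀ x : X, interior (closure ({x} : Set X)) = ∅ := by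
    intro x
    rw [closure_singleton]
    rcases Set.subset_singleton_iff_eq.1 (interior_subset (s := ({x} : Set X))) with h | h
    · exact h
    · exact absurd (h ▸ isOpen_interior) (hcrowded x)
  have hnotF : ∀ x : X, stoneCechUnit x ∉ F := by
    intro x hx
    have h0 := hFr {x} (hsing x)
    have hmem : stoneCechUnit x ∈ F ∩ closure (stoneCechUnit '' {x}) :=
      ⟨hx, subset_closure (Set.mem_image_of_mem _ rfl)⟩
    rw [h0] at hmem
    exact hmem
  by_cases hfin : 𝒰.Finite
  · have hFo : IsOpen F := by
      rw [h𝒰]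
      exact hfin.isOpen_sInter h𝒰o
    obtain ⟨x, hx⟩ := denseRange_stoneCechUnit.exists_mem_open hFo hFne
    exact absurd hx (hnotF x)
  · haveI : Infinite ↥𝒰 := Set.infinite_coe_iff.mpr hfin
    obtain ⟨p, hpF⟩ := hFne
    obtain ⟨G, hGp⟩ := CovMeagerAux.ucast_surjective p
    obtain ⟨x₀, -⟩ := G.nonempty_of_mem Filter.univ_mem
    haveI : Nonempty X := ⟨x₀⟩
    have hG1 : ∀ x : X, {x} ∉ G := by
      intro x hx
      have hcl := CovMeagerAux.ucast_mem_closure_image G hx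
      rw [hGp] at hcl
      have h0 := hFr {x} (hsing x)
      have hmem : p ∈ F ∩ closure (stoneCechUnit '' {x}) := ⟨hpF, hcl⟩
      rw [h0] at hmem
      exact hmem
    have hFsub : ∀ u : ↥𝒰, F ⊆ (u : Set (StoneCech X)) := by
      intro u
      rw [h𝒰]
      exact Set.sInter_subset_of_mem u.2
    choose U' hU'o hFU' hclU' using fun u : ↥𝒰 =>
      normal_exists_closure_subset hFc (h𝒰o u u.2) (hFsub u)
    set A : Finset ↥𝒰 → Set X :=
      fun S => stoneCechUnit ⁻¹' (⋂ u ∈ S, U' u) with hA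
    have hAio : ∀ S : Finset ↥𝒰, IsOpen (⋂ u ∈ S, U' u) :=
      fun S => isOpen_biInter_finset fun u _ => hU'o u
    have hAo : ∀ S, IsOpen (A S) := fun S => (hAio S).preimage continuous_stoneCechUnit
    have hAG : ∀ S, A S ∈ G := by
      intro S
      apply CovMeagerAux.preimage_mem_of_ucast_mem G (hAio S)
      rw [hGp]
      exact Set.mem_iInter₂.2 fun u _ => hFU' u hpF
    set Mf : Finset ↥𝒰 → Set (ℕ → ℕ) := fun S => (CovMeagerAux.hitSet G (A S))ᶜ with hMf
    by_cases hcov : ⋃₀ Set.range Mf = Set.univ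
    · have h1 : covMeager ≤ #(Set.range Mf) := by
        apply csInf_le'
        refine ⟨Set.range Mf, ?_, hcov, rfl⟩
        rintro B ⟨S, rfl⟩
        show IsMeagre (Mf S)
        rw [IsMeagre, show (Mf S)ᶜ = CovMeagerAux.hitSet G (A S) from compl_compl _]
        exact residual_of_dense_open (CovMeagerAux.isOpen_hitSet G (A S))
          (CovMeagerAux.dense_hitSet G hG1 (hAo S) (hAG S))
      calc Cardinal.lift.{u} covMeager
          ≤ Cardinal.lift.{u} #(Set.range Mf) := Cardinal.lift_le.mpr h1
        _ ≤ Cardinal.lift.{0} #(Finset ↥𝒰) := Cardinal.mk_range_le_lift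
        _ = Cardinal.lift.{0} #↥𝒰 := by rw [Cardinal.mk_finset_of_infinite]
    · obtain ⟨f, hf⟩ := (Set.ne_univ_iff_exists_notMem _).1 hcov
      have hfS : ∀ S : Finset ↥𝒰, f ∈ CovMeagerAux.hitSet G (A S) := by
        intro S
        by_contra h
        exact hf ⟨Mf S, ⟨S, rfl⟩, h⟩
      have hPA : ∀ S : Finset ↥𝒰, ∃ x, x ∈ CovMeagerAux.Pts G f ∧ x ∈ A S := by
        intro S
        obtain ⟨n, q, hq, hqA⟩ := hfS S
        exact ⟨q.1, ⟨n, q.2, hq⟩, hqA⟩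
      set Cs : ↥𝒰 → Set (StoneCech X) := fun u =>
        closure (stoneCechUnit '' (CovMeagerAux.Pts G f ∩ A {u})) with hCs
      have hCne : (⋂ u, Cs u).Nonempty := by
        by_contra h
        rw [Set.not_nonempty_iff_eq_empty] at h
        obtain ⟨t, ht⟩ := IsCompact.elim_finite_subfamily_closed isCompact_univ Cs
          (fun u => isClosed_closure) (by rw [Set.univ_inter]; exact h)
        obtain ⟨x, hxP, hxA⟩ := hPA t
        have hxmem : stoneCechUnit x ∈ Set.univ ∩ ⋂ u ∈ t, Cs u := by
          refine ⟨trivial, Set.mem_iInter₂.2 fun u hu => ?_⟩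
          refine subset_closure (Set.mem_image_of_mem _ ⟨hxP, ?_⟩)
          show stoneCechUnit x ∈ ⋂ v ∈ ({u} : Finset ↥𝒰), U' v
          rw [Finset.set_biInter_singleton]
          exact Set.mem_iInter₂.1 hxA u hu
        rw [ht] at hxmem
        exact hxmem
      obtain ⟨p', hp'⟩ := hCne
      have hp'F : p' ∈ F := by
        rw [h𝒰, Set.mem_sInter]
        intro V hV
        have h1 : p' ∈ Cs ⟨V, hV⟩ := Set.mem_iInter.1 hp' _
        have h2 : stoneCechUnit '' (CovMeagerAux.Pts G f ∩ A {⟨V, hV⟩}) ⊆ U' ⟨V, hV⟩ := by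
          rintro z ⟨w, ⟨-, hw⟩, rfl⟩
          have hw' : stoneCechUnit w ∈ ⋂ v ∈ ({⟨V, hV⟩} : Finset ↥𝒰), U' v := hw
          rwa [Finset.set_biInter_singleton] at hw'
        have h3 := closure_mono h2 h1
        exact hclU' ⟨V, hV⟩ h3
      have hp'cl : p' ∈ closure (stoneCechUnit '' CovMeagerAux.Pts G f) := by
        obtain ⟨u₀⟩ := (inferInstance : Nonempty ↥𝒰)
        exact closure_mono (Set.image_mono Set.inter_subset_left)
          (Set.mem_iInter.1 hp' u₀)
      have h0 := hFr (CovMeagerAux.Pts G f) (CovMeagerAux.pts_nwd hcrowded G f)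
      rw [Set.eq_empty_iff_forall_notMem] at h0
      exact absurd ⟨hp'F, hp'cl⟩ (h0 p')
end

section
/- Let X be a non-compact, crowded, separable metrizable space and F a nonempty closed remote subset of βX. Then χ(F) ≥ min{non(M), d}. -/
open TopologicalSpace Cardinal Filter

/-- The uniformity `non(M)` of the meager ideal on Baire space `ω^ω`: the least
cardinality of a non-meager subset of `ω^ω`. -/
noncomputable def nonMeager : Cardinal :=
  sInf { c | ∃ S : Set (ℕ → ℕ), ¬ IsMeagre S ∧ #S = c }

/-- The dominating number `d`: the least cardinality of a family cofinal in
`(ω^ω, ≤*)`. -/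
noncomputable def domNumber : Cardinal :=
  sInf { c | ∃ D : Set (ℕ → ℕ), (∀ f : ℕ → ℕ, ∃ g ∈ D, ∀ᶠ n in atTop, f n ≤ g n) ∧
      #D = c }

universe u

lemma aleph0_lt_domNumber : ℵ₀ < domNumber := by
  have hne : { c | ∃ D : Set (ℕ → ℕ), (∀ f : ℕ → ℕ, ∃ g ∈ D, ∀ᶠ n in atTop, f n ≤ g n) ∧
      #D = c }.Nonempty :=
    ⟨_, Set.univ, fun f => ⟨f, trivial, Filter.Eventually.of_forall fun n => le_rfl⟩, rfl⟩
  have hmem := csInf_mem hne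
  obtain ⟨D, hD, hcard⟩ := hmem
  rw [domNumber, ← hcard]
  by_contra hle
  push_neg at hle
  haveI : Countable D := Cardinal.mk_le_aleph0_iff.mp hle
  have hDc : D.Countable := Set.countable_coe_iff.mp inferInstance
  obtain ⟨g0, hg0, -⟩ := hD 0
  obtain ⟨e, he⟩ := hDc.exists_eq_range ⟨g0, hg0⟩
  set Fd : ℕ → ℕ := fun n => (Finset.range (n + 1)).sup (fun j => e j n) + 1 with hFd
  obtain ⟨h0, hh0, hev⟩ := hD Fd
  rw [he] at hh0
  obtain ⟨j, rfl⟩ := hh0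
  rw [Filter.eventually_atTop] at hev
  obtain ⟨m, hm⟩ := hev
  have h1 := hm (max m j) (le_max_left _ _)
  have h2 : e j (max m j) ≤ (Finset.range (max m j + 1)).sup (fun i => e i (max m j)) :=
    Finset.le_sup (f := fun i => e i (max m j)) (b := j)
      (Finset.mem_range.mpr (Nat.lt_succ_of_le (le_max_right m j)))
  simp only [hFd] at h1
  omega

/-- If `X` is a non-compact, crowded, separable metrizable space and `F` is a nonempty
closed remote subset of `βX`, then `χ(F) ≥ min{non(M), d}`: every family of open
subsets of `βX` intersecting to `F` has cardinality at least `min{non(M), d}`. -/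
theorem character_of_remote_ge_min_nonMeager_domNumber
    (X : Type u) [MetricSpace X] [SeparableSpace X]
    (hnc : ¬ CompactSpace X)
    (hcrowded : ∀ x : X, ¬ IsOpen ({x} : Set X))
    (F : Set (StoneCech X)) (hFne : F.Nonempty) (hFc : IsClosed F)
    (hFr : IsRemoteSet X F)
    (𝒰 : Set (Set (StoneCech X))) (h𝒰o : ∀ U ∈ 𝒰, IsOpen U)
    (h𝒰 : F = ⋂₀ 𝒰) :
    Cardinal.lift.{u} (min nonMeager domNumber) ≤ Cardinal.lift.{0} #𝒰 := by
  classical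
  by_contra hcon
  rw [not_le] at hcon
  obtain ⟨p, hpF⟩ := hFne
  -- `X` is nonempty
  have hXne : Nonempty X := by
    by_contra hX
    rw [not_nonempty_iff] at hX
    have hre : (Set.range (stoneCechUnit : X → StoneCech X)) = ∅ := Set.range_eq_empty _
    have hd := denseRange_stoneCechUnit (α := X)
    rw [DenseRange, hre] at hd
    have := hd p
    simp at this
  -- countable dense sequence and countable basis
  haveI : SecondCountableTopology X := UniformSpace.secondCountable_of_separable X
  obtain ⟨q, hq⟩ := TopologicalSpace.exists_dense_seq X
  obtain ⟨b, hbc, hbne, hb⟩ := TopologicalSpace.exists_countable_basis X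
  have hbnonempty : b.Nonempty := by
    obtain ⟨x⟩ := hXne
    have hx : x ∈ ⋃₀ b := by rw [hb.sUnion_eq]; trivial
    obtain ⟨s, hs, -⟩ := hx
    exact ⟨s, hs⟩
  obtain ⟨B, hB⟩ := hbc.exists_eq_range hbnonempty
  have hBb : ∀ m : ℕ, B m ∈ b := fun m => by rw [hB]; exact Set.mem_range_self m
  -- crowdedness consequences
  have hpn : ∀ x : X, (nhdsWithin x {x}ᶜ).NeBot := fun x =>
    ⟨fun h => hcrowded x ((isOpen_singleton_iff_punctured_nhds x).mpr h)⟩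
  have hinf : ∀ (U : Set X), IsOpen U → U.Nonempty → U.Infinite := by
    rintro U hU ⟨x, hx⟩
    haveI := hpn x
    exact infinite_of_mem_nhds x (hU.mem_nhds hx)
  -- protection lemma: inside every nonempty open set there is a nonempty open set
  -- whose closure's image-closure misses p
  have hprot : ∀ (U : Set X), IsOpen U → U.Nonempty →
      ∃ O : Set X, IsOpen O ∧ O.Nonempty ∧ O ⊆ U ∧
        p ∉ closure (stoneCechUnit '' (closure O)) := by
    rintro U hU ⟨x, hx⟩
    haveI := hpn x
    have hmem0 : U ∩ {x}ᶜ ∈ nhdsWithin x {x}ᶜ :=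
      Filter.inter_mem (nhdsWithin_le_nhds (hU.mem_nhds hx)) self_mem_nhdsWithin
    obtain ⟨y, hyU, hyx⟩ := Filter.nonempty_of_mem hmem0
    have hxy : (0:ℝ) < dist x y := dist_pos.mpr (Set.mem_compl_singleton_iff.mp hyx).symm
    obtain ⟨εx, hεx, hbx⟩ := Metric.isOpen_iff.mp hU x hx
    obtain ⟨εy, hεy, hby⟩ := Metric.isOpen_iff.mp hU y hyU
    set r := min (min εx εy) (dist x y / 3) with hr
    have hr0 : 0 < r := lt_min (lt_min hεx hεy) (by linarith)
    have hdisj : Disjoint (closure (Metric.ball x r)) (closure (Metric.ball y r)) := by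
      rw [Set.disjoint_left]
      intro z hz1 hz2
      have h1 : dist z x ≤ r := Metric.mem_closedBall.mp (Metric.closure_ball_subset_closedBall hz1)
      have h2 : dist z y ≤ r := Metric.mem_closedBall.mp (Metric.closure_ball_subset_closedBall hz2)
      have hr3 : r ≤ dist x y / 3 := min_le_right _ _
      have htr := dist_triangle x z y
      have : dist x z = dist z x := dist_comm x z
      linarith
    have hone : p ∉ closure (stoneCechUnit '' closure (Metric.ball x r)) ∨
        p ∉ closure (stoneCechUnit '' closure (Metric.ball y r)) := by
      by_contra hcontra
      push_neg at hcontra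
      obtain ⟨h1, h2⟩ := hcontra
      obtain ⟨f, hf0, hf1, hf01⟩ := exists_continuous_zero_one_of_isClosed
        isClosed_closure isClosed_closure hdisj
      set f' : X → Set.Icc (0:ℝ) 1 := fun z => ⟨f z, hf01 z⟩ with hf'
      have hf'c : Continuous f' := Continuous.subtype_mk f.continuous _
      haveI : CompactSpace (Set.Icc (0:ℝ) 1) := isCompact_iff_compactSpace.mp isCompact_Icc
      set gE : StoneCech X → Set.Icc (0:ℝ) 1 := stoneCechExtend hf'c with hgE
      have hgc : Continuous gE := continuous_stoneCechExtend hf'c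
      have hz0 : (gE p : ℝ) = 0 := by
        have hmaps : Set.MapsTo gE
            (stoneCechUnit '' closure (Metric.ball x r))
            {w : Set.Icc (0:ℝ) 1 | (w : ℝ) = 0} := by
          rintro - ⟨z, hz, rfl⟩
          have hzz : gE (stoneCechUnit z) = f' z :=
            congrFun (stoneCechExtend_extends hf'c) z
          simp only [Set.mem_setOf_eq, hzz, hf']
          exact hf0 hz
        have hcl : IsClosed {w : Set.Icc (0:ℝ) 1 | (w:ℝ) = 0} :=
          IsClosed.preimage continuous_subtype_val isClosed_singleton
        have := map_mem_closure hgc h1 hmaps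
        rwa [hcl.closure_eq] at this
      have hz1 : (gE p : ℝ) = 1 := by
        have hmaps : Set.MapsTo gE
            (stoneCechUnit '' closure (Metric.ball y r))
            {w : Set.Icc (0:ℝ) 1 | (w : ℝ) = 1} := by
          rintro - ⟨z, hz, rfl⟩
          have hzz : gE (stoneCechUnit z) = f' z :=
            congrFun (stoneCechExtend_extends hf'c) z
          simp only [Set.mem_setOf_eq, hzz, hf']
          exact hf1 hz
        have hcl : IsClosed {w : Set.Icc (0:ℝ) 1 | (w:ℝ) = 1} :=
          IsClosed.preimage continuous_subtype_val isClosed_singleton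
        have := map_mem_closure hgc h2 hmaps
        rwa [hcl.closure_eq] at this
      rw [hz0] at hz1
      norm_num at hz1
    rcases hone with h | h
    · exact ⟨Metric.ball x r, Metric.isOpen_ball, ⟨x, Metric.mem_ball_self hr0⟩,
        (Metric.ball_subset_ball ((min_le_left _ _).trans (min_le_left _ _))).trans hbx, h⟩
    · exact ⟨Metric.ball y r, Metric.isOpen_ball, ⟨y, Metric.mem_ball_self hr0⟩,
        (Metric.ball_subset_ball ((min_le_left _ _).trans (min_le_right _ _))).trans hby, h⟩
  have hOex : ∀ m : ℕ, ∃ O : Set X, IsOpen O ∧ O.Nonempty ∧ O ⊆ B m ∧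
      p ∉ closure (stoneCechUnit '' (closure O)) := by
    intro m
    refine hprot (B m) (hb.isOpen (hBb m)) ?_
    rw [Set.nonempty_iff_ne_empty]
    intro h
    exact hbne (h ▸ hBb m)
  choose O hOopen hOne hOsub hOp using hOex
  -- the open sets R k
  set R : ℕ → Set (StoneCech X) :=
    fun k => ⋂ j ∈ Finset.range (k+1), (closure (stoneCechUnit '' closure (O j)))ᶜ with hR
  have hRopen : ∀ k, IsOpen (R k) :=
    fun k => isOpen_biInter_finset fun j _ => isClosed_closure.isOpen_compl
  have hpR : ∀ k, p ∈ R k := fun k => Set.mem_iInter₂.mpr fun j _ => hOp j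
  have hRav : ∀ i k, stoneCechUnit (q i) ∈ R k → ∀ j ≤ k, q i ∉ closure (O j) := by
    intro i k hik j hj hcl
    have hmem' : stoneCechUnit (q i) ∈ closure (stoneCechUnit '' closure (O j)) :=
      subset_closure (Set.mem_image_of_mem _ hcl)
    exact (Set.mem_iInter₂.mp hik j (Finset.mem_range.mpr (Nat.lt_succ_of_le hj))) hmem'
  -- regular shrinkings W s of finite intersections
  have hWex : ∀ s : Finset (Set (StoneCech X)), ∃ Ws : Set (StoneCech X),
      IsOpen Ws ∧ p ∈ Ws ∧ ((s : Set (Set (StoneCech X))) ⊆ 𝒰 →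
        closure Ws ⊆ ⋂₀ (s : Set (Set (StoneCech X)))) := by
    intro s
    by_cases hs : (s : Set (Set (StoneCech X))) ⊆ 𝒰
    · have hopen : IsOpen (⋂₀ (s : Set (Set (StoneCech X)))) :=
        Set.Finite.isOpen_sInter s.finite_toSet fun U hU => h𝒰o U (hs hU)
      have hps : p ∈ ⋂₀ (s : Set (Set (StoneCech X))) := by
        have hsub : F ⊆ ⋂₀ (s : Set (Set (StoneCech X))) := by
          rw [h𝒰]; exact Set.sInter_subset_sInter hs
        exact hsub hpF
      obtain ⟨C, hC𝓝, hCcl, hCsub⟩ := exists_mem_nhds_isClosed_subset (hopen.mem_nhds hps)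
      exact ⟨interior C, isOpen_interior, mem_interior_iff_mem_nhds.mpr hC𝓝,
        fun _ => (closure_minimal interior_subset hCcl).trans hCsub⟩
    · exact ⟨Set.univ, isOpen_univ, trivial, fun h => absurd h hs⟩
  choose W hWopen hpW hWsub using hWex
  set T : Finset (Set (StoneCech X)) → Set (StoneCech X) :=
    fun s => ⋂ t ∈ s.powerset, W t with hT
  have hTopen : ∀ s, IsOpen (T s) := fun s => isOpen_biInter_finset fun t _ => hWopen t
  have hpT : ∀ s, p ∈ T s := fun s => Set.mem_iInter₂.mpr fun t _ => hpW t
  have hTmono : ∀ s s', s ⊆ s' → T s' ⊆ T s := by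
    intro s s' hss y hy
    simp only [hT, Set.mem_iInter] at hy ⊢
    intro t ht
    exact hy t (Finset.powerset_mono.mpr hss ht)
  have hTsubW : ∀ s, T s ⊆ W s := by
    intro s y hy
    exact (Set.mem_iInter₂.mp hy) s (Finset.mem_powerset_self s)
  -- the functions f
  have htrace : ∀ (s : Finset (Set (StoneCech X))) (k : ℕ),
      {i : ℕ | stoneCechUnit (q i) ∈ T s ∩ R k}.Nonempty := by
    intro s k
    have hopen : IsOpen (T s ∩ R k) := (hTopen s).inter (hRopen k)
    have hne : (T s ∩ R k).Nonempty := ⟨p, hpT s, hpR k⟩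
    obtain ⟨x, hx⟩ := (denseRange_stoneCechUnit).exists_mem_open hopen hne
    have hopen' : IsOpen (stoneCechUnit ⁻¹' (T s ∩ R k)) :=
      hopen.preimage continuous_stoneCechUnit
    obtain ⟨i, hi⟩ := hq.exists_mem_open hopen' ⟨x, hx⟩
    exact ⟨i, hi⟩
  set f : Finset (Set (StoneCech X)) → ℕ → ℕ :=
    fun s k => sInf {i | stoneCechUnit (q i) ∈ T s ∩ R k} with hf
  have hfmem : ∀ s k, stoneCechUnit (q (f s k)) ∈ T s ∩ R k :=
    fun s k => Nat.sInf_mem (htrace s k)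
  -- cardinality bound
  set A : Set (ℕ → ℕ) :=
    Set.range (fun s : {s : Finset (Set (StoneCech X)) // (s : Set (Set (StoneCech X))) ⊆ 𝒰} =>
      f s.1) with hA
  have hAcard : Cardinal.lift.{u} #A < Cardinal.lift.{u} domNumber := by
    have h1 : Cardinal.lift.{u} #A ≤
        Cardinal.lift.{0} #{s : Finset (Set (StoneCech X)) // (s : Set (Set (StoneCech X))) ⊆ 𝒰} :=
      Cardinal.mk_range_le_lift
    have h2 : #{s : Finset (Set (StoneCech X)) // (s : Set (Set (StoneCech X))) ⊆ 𝒰} ≤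
        #(Finset 𝒰) := by
      apply Cardinal.mk_le_of_injective
        (f := fun s : {s : Finset (Set (StoneCech X)) // (s : Set (Set (StoneCech X))) ⊆ 𝒰} =>
          Finset.subtype (· ∈ 𝒰) s.1)
      intro s s' h
      apply Subtype.ext
      have hs := congrArg (Finset.map (Function.Embedding.subtype (· ∈ 𝒰))) h
      rwa [Finset.subtype_map, Finset.subtype_map,
        Finset.filter_true_of_mem (fun x hx => s.2 hx),
        Finset.filter_true_of_mem (fun x hx => s'.2 hx)] at hs
    have h3 : #(Finset 𝒰) ≤ max ℵ₀ #𝒰 := by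
      rcases finite_or_infinite 𝒰 with hfin | hinf'
      · haveI := Fintype.ofFinite 𝒰
        exact le_max_of_le_left (Cardinal.lt_aleph0_of_finite (Finset 𝒰)).le
      · exact le_max_of_le_right (Cardinal.mk_finset_of_infinite 𝒰).le
    calc Cardinal.lift.{u} #A
        ≤ Cardinal.lift.{0} #{s : Finset (Set (StoneCech X)) // (s : Set (Set (StoneCech X))) ⊆ 𝒰} := h1
      _ ≤ Cardinal.lift.{0} (max ℵ₀ #𝒰) := Cardinal.lift_le.mpr (h2.trans h3)
      _ = max (Cardinal.lift.{0} ℵ₀) (Cardinal.lift.{0} #𝒰) := Cardinal.lift_max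
      _ < Cardinal.lift.{u} domNumber := by
          apply max_lt
          · have hlt : Cardinal.lift.{u} (ℵ₀ : Cardinal.{0}) < Cardinal.lift.{u} domNumber :=
              Cardinal.lift_lt.mpr aleph0_lt_domNumber
            simpa using hlt
          · exact hcon.trans_le (Cardinal.lift_le.mpr (min_le_right _ _))
  -- escape function g
  have hesc : ∃ g : ℕ → ℕ,
      ∀ s : Finset (Set (StoneCech X)), (s : Set (Set (StoneCech X))) ⊆ 𝒰 →
        ∃ k, f s k ≤ g k := by
    by_contra hg
    push_neg at hg
    have hdom : ∀ h : ℕ → ℕ, ∃ g' ∈ A, ∀ᶠ n in atTop, h n ≤ g' n := by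
      intro h
      obtain ⟨s, hs𝒰, hs⟩ := hg h
      exact ⟨f s, ⟨⟨s, hs𝒰⟩, rfl⟩, Filter.Eventually.of_forall fun n => (hs n).le⟩
    have hle : domNumber ≤ #A :=
      csInf_le ⟨0, fun c _ => zero_le⟩ ⟨A, hdom, rfl⟩
    exact absurd (Cardinal.lift_le.mpr hle) (not_le.mpr hAcard)
  obtain ⟨g, hg⟩ := hesc
  -- the nowhere dense set N
  set N : Set X := {x | ∃ k i, i ≤ g k ∧ x = q i ∧ stoneCechUnit (q i) ∈ R k} with hN
  have hhit : ∀ s : Finset (Set (StoneCech X)), (s : Set (Set (StoneCech X))) ⊆ 𝒰 →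
      ∃ x ∈ N, stoneCechUnit x ∈ T s := by
    intro s hs
    obtain ⟨k, hk⟩ := hg s hs
    exact ⟨q (f s k), ⟨k, f s k, hk, rfl, (hfmem s k).2⟩, (hfmem s k).1⟩
  -- N is nowhere dense
  have hNint : interior (closure N) = ∅ := by
    by_contra hi
    obtain ⟨x, hx⟩ := Set.nonempty_iff_ne_empty.mpr hi
    obtain ⟨Bm, hBmb, hxB, hBsub⟩ := hb.exists_subset_of_mem_open hx isOpen_interior
    rw [hB] at hBmb
    obtain ⟨m, rfl⟩ := hBmb
    have hfin : (N ∩ O m).Finite := by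
      apply Set.Finite.subset (Set.Finite.image q (Set.finite_Iic ((Finset.range m).sup g)))
      rintro z ⟨hzN, hzO⟩
      obtain ⟨k, i, hik, rfl, hR'⟩ := hzN
      have hkm : k < m := by
        by_contra hkm
        push_neg at hkm
        exact hRav i k hR' m hkm (subset_closure hzO)
      exact ⟨i, Set.mem_Iic.mpr (hik.trans (Finset.le_sup (Finset.mem_range.mpr hkm))), rfl⟩
    have hO'open : IsOpen (O m \ (N ∩ O m)) := (hOopen m).sdiff hfin.isClosed
    have hO'ne : (O m \ (N ∩ O m)).Nonempty :=
      ((hinf (O m) (hOopen m) (hOne m)).diff hfin).nonempty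
    obtain ⟨z, hz⟩ := hO'ne
    have hzcl : z ∈ closure N := interior_subset (hBsub (hOsub m hz.1))
    have hdis : (O m \ (N ∩ O m)) ∩ N = ∅ := by
      rw [Set.eq_empty_iff_forall_notMem]
      rintro w ⟨⟨hwO, hwn⟩, hwN⟩
      exact hwn ⟨hwN, hwO⟩
    have hsub := hO'open.inter_closure (t := N)
    rw [hdis, closure_empty] at hsub
    exact hsub ⟨hz, hzcl⟩
  -- the compactness argument
  haveI : Nonempty {s : Finset (Set (StoneCech X)) // (s : Set (Set (StoneCech X))) ⊆ 𝒰} :=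
    ⟨⟨∅, by simp⟩⟩
  set D : {s : Finset (Set (StoneCech X)) // (s : Set (Set (StoneCech X))) ⊆ 𝒰} →
      Set (StoneCech X) :=
    fun s => closure (stoneCechUnit '' (N ∩ stoneCechUnit ⁻¹' (T s.1))) with hD
  have hDne : ∀ s, (D s).Nonempty := by
    intro s
    obtain ⟨x, hxN, hxT⟩ := hhit s.1 s.2
    exact ⟨stoneCechUnit x, subset_closure (Set.mem_image_of_mem _ ⟨hxN, hxT⟩)⟩
  have hDdir : Directed (· ⊇ ·) D := by
    intro s s'
    refine ⟨⟨s.1 ∪ s'.1, by rw [Finset.coe_union]; exact Set.union_subset s.2 s'.2⟩, ?_, ?_⟩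
    · exact closure_mono (Set.image_mono (Set.inter_subset_inter_right _
        (Set.preimage_mono (hTmono _ _ Finset.subset_union_left))))
    · exact closure_mono (Set.image_mono (Set.inter_subset_inter_right _
        (Set.preimage_mono (hTmono _ _ Finset.subset_union_right))))
  obtain ⟨y, hy⟩ := IsCompact.nonempty_iInter_of_directed_nonempty_isCompact_isClosed
    D hDdir hDne (fun s => isClosed_closure.isCompact) (fun s => isClosed_closure)
  rw [Set.mem_iInter] at hy
  have hyF : y ∈ F := by
    rw [h𝒰, Set.mem_sInter]
    intro U hU
    have hsub : ((({U} : Finset (Set (StoneCech X))) : Set (Set (StoneCech X)))) ⊆ 𝒰 := by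
      simp [hU]
    have h1 := hy ⟨{U}, hsub⟩
    have h2 : D ⟨{U}, hsub⟩ ⊆ U := by
      have e1 : stoneCechUnit '' (N ∩ stoneCechUnit ⁻¹' (T {U})) ⊆ T {U} := by
        rintro - ⟨z, ⟨-, hz⟩, rfl⟩
        exact hz
      calc D ⟨{U}, hsub⟩ ⊆ closure (T {U}) := closure_mono e1
        _ ⊆ closure (W {U}) := closure_mono (hTsubW {U})
        _ ⊆ ⋂₀ ((({U} : Finset (Set (StoneCech X))) : Set (Set (StoneCech X)))) :=
            hWsub {U} hsub
        _ ⊆ U := by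
            intro w hw
            rw [Finset.coe_singleton, Set.sInter_singleton] at hw
            exact hw
    exact h2 h1
  have hycl : y ∈ closure (stoneCechUnit '' N) := by
    have h1 := hy ⟨∅, by simp⟩
    exact closure_mono (Set.image_mono Set.inter_subset_left) h1
  have hrem := hFr N hNint
  rw [Set.eq_empty_iff_forall_notMem] at hrem
  exact hrem y ⟨hyF, hycl⟩
end

section
/- For every nowhere dense subset N of the Cantor space 2^ω, there exist p ∈ 2^ω and a strictly increasing j : ω → ω with j(0) = 0 such that N ∩ U(p,j) = ∅, where U(p,j) is the set of q ∈ 2^ω agreeing with p on some block [j(n), j(n+1)). -/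
/-- For `p ∈ 2^ω` and `j : ω → ω`, `blockSet p j` is the set of `q ∈ 2^ω` agreeing with
`p` on some block `[j n, j (n+1))`. -/
def blockSet (p : ℕ → Bool) (j : ℕ → ℕ) : Set (ℕ → Bool) :=
  { q | ∃ n : ℕ, ∀ k : ℕ, j n ≤ k → k < j (n + 1) → q k = p k }

/-- In an open dense subset of Cantor space, any finite condition can be extended to a
cylinder contained in the set. -/
lemma dense_open_ext (D : Set (ℕ → Bool)) (hO : IsOpen D) (hD : Dense D)
    (g : ℕ → Bool) (m : ℕ) :
    ∃ (h : ℕ → Bool) (m' : ℕ), m ≤ m' ∧ (∀ k, k < m → h k = g k) ∧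
      ∀ q : ℕ → Bool, (∀ k, k < m' → q k = h k) → q ∈ D := by
  have hC : IsOpen {q : ℕ → Bool | ∀ k ∈ Finset.range m, q k = g k} := by
    have : {q : ℕ → Bool | ∀ k ∈ Finset.range m, q k = g k}
        = ⋂ k ∈ Finset.range m, {q : ℕ → Bool | q k = g k} := by
      ext q; simp
    rw [this]
    refine isOpen_biInter_finset fun k _ => ?_
    have : {q : ℕ → Bool | q k = g k} = (fun q : ℕ → Bool => q k) ⁻¹' {x | x = g k} := rfl
    rw [this]
    exact (isOpen_discrete _).preimage (continuous_apply k)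
  have hne : {q : ℕ → Bool | ∀ k ∈ Finset.range m, q k = g k}.Nonempty :=
    ⟨g, fun k _ => rfl⟩
  obtain ⟨x, hxC, hxD⟩ := hD.inter_open_nonempty _ hC hne
  obtain ⟨I, u, hIu, hsub⟩ := (isOpen_pi_iff.mp hO) x hxD
  refine ⟨x, max m ((I.sup id) + 1), le_max_left _ _, fun k hk => hxC k (Finset.mem_range.mpr hk),
    fun q hq => hsub ?_⟩
  intro i hi
  have : q i = x i := by
    apply hq
    exact lt_of_lt_of_le (Nat.lt_succ_of_le (Finset.le_sup (f := id) hi)) (le_max_right _ _)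
  rw [this]
  exact (hIu i hi).2

/-- Given an open dense set `D`, one can choose a block `[a, b)` and values `e` on it so that
any point matching `e` on that block (with `q ↾ [0,a)` in a given finite set of stems) is in
`D`. -/
lemma stems_lemma (D : Set (ℕ → Bool)) (hO : IsOpen D) (hD : Dense D) (a : ℕ)
    (S : Finset (Fin a → Bool)) :
    ∃ (e : ℕ → Bool) (b : ℕ), a ≤ b ∧ ∀ s ∈ S, ∀ q : ℕ → Bool, (∀ k : Fin a, q k = s k) →
      (∀ k, a ≤ k → k < b → q k = e k) → q ∈ D := by
  classical
  induction S using Finset.induction_on with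
  | empty => exact ⟨fun _ => false, a, le_rfl, fun s hs => absurd hs (by simp)⟩
  | @insert s S hsS ih =>
    obtain ⟨e, b, hab, hIH⟩ := ih
    set g : ℕ → Bool := fun k => if h : k < a then s ⟨k, h⟩ else e k with hg
    obtain ⟨h, m', hbm', hagree, hcyl⟩ := dense_open_ext D hO hD g b
    refine ⟨h, m', hab.trans hbm', ?_⟩
    intro s' hs' q hstem hblock
    rcases Finset.mem_insert.mp hs' with rfl | hs'S
    · apply hcyl
      intro k hk
      by_cases hka : k < a
      · rw [hstem ⟨k, hka⟩]
        have hgk : g k = s' ⟨k, hka⟩ := by simp [hg, hka]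
        rw [← hgk, hagree k (lt_of_lt_of_le hka hab), hgk]
      · exact hblock k (not_lt.mp hka) hk
    · apply hIH s' hs'S q hstem
      intro k hak hkb
      have hge : e k = g k := by simp [hg, not_lt.mpr hak]
      rw [hblock k hak (lt_of_lt_of_le hkb hbm'), hge, hagree k hkb]

/-- Single-step lemma: for any `a` there are `e` and `b > a` such that any point matching `e`
on `[a, b)` lies in `D`. -/
lemma step_lemma (D : Set (ℕ → Bool)) (hO : IsOpen D) (hD : Dense D) (a : ℕ) :
    ∃ (e : ℕ → Bool) (b : ℕ), a < b ∧
      ∀ q : ℕ → Bool, (∀ k, a ≤ k → k < b → q k = e k) → q ∈ D := by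
  classical
  obtain ⟨e, b, hab, hall⟩ := stems_lemma D hO hD a Finset.univ
  refine ⟨e, max b (a + 1), lt_of_lt_of_le (Nat.lt_succ_self a) (le_max_right _ _), ?_⟩
  intro q hq
  exact hall (fun i : Fin a => q i) (Finset.mem_univ _) q (fun _ => rfl)
    (fun k hak hkb => hq k hak (lt_of_lt_of_le hkb (le_max_left _ _)))

/-- For every nowhere dense subset `N` of Cantor space `2^ω` there are `p ∈ 2^ω` and a
strictly increasing `j : ω → ω` with `j 0 = 0` such that `N ∩ U(p,j) = ∅`. -/
theorem nowhereDense_avoids_blockSet (N : Set (ℕ → Bool))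
    (hN : interior (closure N) = ∅) :
    ∃ (p : ℕ → Bool) (j : ℕ → ℕ), StrictMono j ∧ j 0 = 0 ∧ N ∩ blockSet p j = ∅ := by
  classical
  set D : Set (ℕ → Bool) := (closure N)ᶜ with hDdef
  have hO : IsOpen D := isClosed_closure.isOpen_compl
  have hDense : Dense D := interior_eq_empty_iff_dense_compl.mp hN
  have key : ∀ a : ℕ, ∃ eb : (ℕ → Bool) × ℕ, a < eb.2 ∧
      ∀ q : ℕ → Bool, (∀ k, a ≤ k → k < eb.2 → q k = eb.1 k) → q ∈ D := by
    intro a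
    obtain ⟨e, b, hab, hq⟩ := step_lemma D hO hDense a
    exact ⟨(e, b), hab, hq⟩
  choose eb hlt hmem using key
  -- define j recursively
  set j : ℕ → ℕ := fun n => Nat.rec 0 (fun _ ih => (eb ih).2) n with hj
  have hj0 : j 0 = 0 := rfl
  have hjsucc : ∀ n, j (n + 1) = (eb (j n)).2 := fun n => rfl
  have hmono : StrictMono j := by
    apply strictMono_nat_of_lt_succ
    intro n
    rw [hjsucc]
    exact hlt (j n)
  -- define p
  set p : ℕ → Bool := fun k => (eb (j (Nat.findGreatest (fun m => j m ≤ k) k))).1 k with hp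
  refine ⟨p, j, hmono, hj0, ?_⟩
  ext q
  simp only [Set.mem_inter_iff, Set.mem_empty_iff_false, iff_false, not_and]
  intro hqN hqB
  obtain ⟨n, hn⟩ := hqB
  -- show that for k in [j n, j (n+1)), the findGreatest index is n
  have hidx : ∀ k, j n ≤ k → k < j (n + 1) → Nat.findGreatest (fun m => j m ≤ k) k = n := by
    intro k hnk hks
    have hnk' : n ≤ k := le_trans (hmono.le_apply) hnk
    have hge : n ≤ Nat.findGreatest (fun m => j m ≤ k) k :=
      Nat.le_findGreatest hnk' hnk
    rcases Nat.lt_or_ge n (Nat.findGreatest (fun m => j m ≤ k) k) with hlt' | hle'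
    · exfalso
      have hspec : j (Nat.findGreatest (fun m => j m ≤ k) k) ≤ k :=
        Nat.findGreatest_spec (P := fun m => j m ≤ k) hnk' hnk
      have : j (n + 1) ≤ j (Nat.findGreatest (fun m => j m ≤ k) k) := hmono.le_iff_le.mpr hlt'
      exact absurd (this.trans hspec) (not_le.mpr hks)
    · exact le_antisymm hle' hge
  have hqD : q ∈ D := by
    apply hmem (j n) q
    intro k hak hkb
    have := hn k hak hkb
    rw [this, hp]
    simp only [hidx k hak hkb]
  exact hqD (subset_closure hqN)
end

section
/- Every forcing with the Sacks property is ω^ω-bounding implies the block-covering fact: if P has the Sacks property, p forces ẋ ∈ 2^ω and ḟ ∈ ω^ω strictly increasing with ḟ(0)=0, then there exist q ≤ p, a ground-model y ∈ 2^ω, and a ground-model strictly increasing g ∈ ω^ω with g(0)=0 such that q forces U(y,g) ⊆ U(ẋ,ḟ). -/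
/-- An abstract forcing notion: a preordered set of conditions together with a class of
generic filters; names for objects of the extension are interpreted as functions on
generic filters, and `p ⊩ φ(ȧ)` is rendered as "for every generic `G` containing `p`,
`φ` holds of the evaluation of `ȧ` at `G`". -/
structure ForcingNotion where
  P : Type
  le : P → P → Prop
  le_refl : ∀ p, le p p
  le_trans : ∀ {p q r}, le p q → le q r → le p r
  Generic : Set (Set P)
  generic_upward : ∀ G ∈ Generic, ∀ p ∈ G, ∀ q, le p q → q ∈ G
  generic_exists : ∀ p : P, ∃ G ∈ Generic, p ∈ G

/-- `P` has the Sacks property. -/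
def SacksProperty (𝔽 : ForcingNotion) : Prop :=
  ∀ (f : {G // G ∈ 𝔽.Generic} → ℕ → ℕ) (p : 𝔽.P),
    ∃ (F : ℕ → Finset ℕ) (q : 𝔽.P), 𝔽.le q p ∧ (∀ n, (F n).card ≤ 2 ^ n) ∧
      ∀ G : {G // G ∈ 𝔽.Generic}, q ∈ G.1 → ∀ n, f G n ∈ F n

/-- A step function built from a dominating function `h`: an interval
`[a, stepFn h a)` always contains a full `f`-block provided `f ≤ h` pointwise
and `f` is strictly monotone. -/
private def stepFn (h : ℕ → ℕ) (a : ℕ) : ℕ := h (a + 1) + a + 1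

private lemma stepFn_lt (h : ℕ → ℕ) (a : ℕ) : a < stepFn h a := by
  unfold stepFn; omega

private lemma iter_mono (h : ℕ → ℕ) (a : ℕ) :
    Monotone fun i => (stepFn h)^[i] a :=
  monotone_nat_of_le_succ fun i => by
    rw [Function.iterate_succ_apply']
    exact (stepFn_lt h _).le

private lemma iter_add_le (h : ℕ → ℕ) (a i : ℕ) : a + i ≤ (stepFn h)^[i] a := by
  induction i with
  | zero => simp
  | succ i ih =>
    rw [Function.iterate_succ_apply']
    have := stepFn_lt h ((stepFn h)^[i] a)
    omega

/-- Ground-model block endpoints: block `n` consists of `2^n` step-subintervals. -/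
private def sB (h : ℕ → ℕ) : ℕ → ℕ
  | 0 => 0
  | n + 1 => (stepFn h)^[2 ^ n] (sB h n)

private lemma sB_strictMono (h : ℕ → ℕ) : StrictMono (sB h) :=
  strictMono_nat_of_lt_succ fun n => by
    have h1 := iter_add_le h (sB h n) (2 ^ n)
    have h2 : 0 < 2 ^ n := Nat.pow_pos (by norm_num)
    show sB h n < (stepFn h)^[2 ^ n] (sB h n)
    omega

/-- If `P` has the Sacks property, `p` forces `ẋ ∈ 2^ω` and `ḟ ∈ ω^ω` strictly
increasing with `ḟ(0) = 0`, then there are `q ≤ p`, a ground-model `y ∈ 2^ω` and a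
ground-model strictly increasing `g` with `g 0 = 0` such that `q ⊩ U(y,g) ⊆ U(ẋ,ḟ)`. -/
theorem sacks_block_covering (𝔽 : ForcingNotion) (hS : SacksProperty 𝔽)
    (x : {G // G ∈ 𝔽.Generic} → ℕ → Bool)
    (f : {G // G ∈ 𝔽.Generic} → ℕ → ℕ)
    (p : 𝔽.P)
    (hf : ∀ G : {G // G ∈ 𝔽.Generic}, p ∈ G.1 → StrictMono (f G) ∧ f G 0 = 0) :
    ∃ (q : 𝔽.P) (y : ℕ → Bool) (g : ℕ → ℕ), 𝔽.le q p ∧ StrictMono g ∧ g 0 = 0 ∧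
      ∀ G : {G // G ∈ 𝔽.Generic}, q ∈ G.1 →
        blockSet y g ⊆ blockSet (x G) (f G) := by
  classical
  -- Step 1: use the Sacks property on `f` to get a dominating ground-model function.
  obtain ⟨Ff, q1, hq1p, -, hFf⟩ := hS f p
  set h : ℕ → ℕ := fun n => (Ff n).sup id with hh
  have hdom : ∀ G : {G // G ∈ 𝔽.Generic}, q1 ∈ G.1 → ∀ n, f G n ≤ h n := by
    intro G hG n
    simpa using Finset.le_sup (f := id) (hFf G hG n)
  -- Step 2: apply the Sacks property to the name for initial segments of `x`.
  set c : {G // G ∈ 𝔽.Generic} → ℕ → ℕ := fun G n =>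
    Encodable.encode (List.ofFn fun j : Fin (sB h (n + 1)) => x G j) with hc
  obtain ⟨Fc, q, hqq1, hFcard, hFc⟩ := hS c q1
  -- Step 3: define the ground-model real `y`.
  have hexblk : ∀ k : ℕ, ∃ n, k < sB h (n + 1) := fun k =>
    ⟨k, lt_of_lt_of_le (Nat.lt_succ_self k) ((sB_strictMono h).le_apply)⟩
  set blk : ℕ → ℕ := fun k => Nat.find (hexblk k) with hblkdef
  have hexsub : ∀ n k : ℕ, ∃ i, k < (stepFn h)^[i + 1] (sB h n) := fun n k =>
    ⟨k, by have := iter_add_le h (sB h n) (k + 1); omega⟩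
  set sub : ℕ → ℕ → ℕ := fun n k => Nat.find (hexsub n k) with hsubdef
  set y : ℕ → Bool := fun k =>
    (((Encodable.decode (((Fc (blk k)).sort (· ≤ ·)).getD (sub (blk k) k) 0) :
        Option (List Bool)).getD []).getD k false) with hy
  -- characterization of blk
  have hblk_eq : ∀ n k, sB h n ≤ k → k < sB h (n + 1) → blk k = n := by
    intro n k h1 h2
    rw [hblkdef]
    rw [Nat.find_eq_iff]
    refine ⟨h2, fun m hm hlt => ?_⟩
    have : sB h (m + 1) ≤ sB h n := (sB_strictMono h).monotone (by omega)
    omega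
  -- characterization of sub
  have hsub_eq : ∀ n i k, (stepFn h)^[i] (sB h n) ≤ k →
      k < (stepFn h)^[i + 1] (sB h n) → sub n k = i := by
    intro n i k h1 h2
    rw [hsubdef]
    rw [Nat.find_eq_iff]
    refine ⟨h2, fun m hm hlt => ?_⟩
    have : (stepFn h)^[m + 1] (sB h n) ≤ (stepFn h)^[i] (sB h n) :=
      iter_mono h (sB h n) (by omega)
    omega
  refine ⟨q, y, sB h, 𝔽.le_trans hqq1 hq1p, sB_strictMono h, rfl, ?_⟩
  intro G hGq z hz
  obtain ⟨n, hzn⟩ := hz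
  have hq1G : q1 ∈ G.1 := 𝔽.generic_upward G.1 G.2 q hGq q1 hqq1
  have hpG : p ∈ G.1 := 𝔽.generic_upward G.1 G.2 q1 hq1G p hq1p
  obtain ⟨hfmono, -⟩ := hf G hpG
  -- the true candidate and its index
  set L : List Bool := List.ofFn fun j : Fin (sB h (n + 1)) => x G j with hL
  have hmem : Encodable.encode L ∈ (Fc n).sort (· ≤ ·) :=
    (Finset.mem_sort _).2 (hFc G hGq n)
  set i : ℕ := ((Fc n).sort (· ≤ ·)).idxOf (Encodable.encode L) with hi
  have hilen : i < ((Fc n).sort (· ≤ ·)).length := List.idxOf_lt_length_iff.2 hmem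
  have hi2 : i < 2 ^ n := by
    have := hFcard n
    rw [Finset.length_sort] at hilen
    omega
  set a : ℕ := (stepFn h)^[i] (sB h n) with ha
  have ha1 : sB h n ≤ a := by
    have := iter_mono h (sB h n) (Nat.zero_le i)
    simpa using this
  have ha2 : (stepFn h)^[i + 1] (sB h n) ≤ sB h (n + 1) := by
    show (stepFn h)^[i + 1] (sB h n) ≤ (stepFn h)^[2 ^ n] (sB h n)
    exact iter_mono h (sB h n) (by omega)
  have hstep_eq : (stepFn h)^[i + 1] (sB h n) = stepFn h a := by
    rw [Function.iterate_succ_apply']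
  refine ⟨a, ?_⟩
  intro k hk1 hk2
  -- `k` lies in the subinterval `[a, stepFn h a)`
  have hka : a ≤ k := le_trans hfmono.le_apply hk1
  have hkb : k < (stepFn h)^[i + 1] (sB h n) := by
    rw [hstep_eq]
    have h1 : f G (a + 1) ≤ h (a + 1) := hdom G hq1G (a + 1)
    have : h (a + 1) < stepFn h a := by unfold stepFn; omega
    omega
  have hkn : k < sB h (n + 1) := lt_of_lt_of_le hkb ha2
  have hzk : z k = y k := hzn k (le_trans ha1 hka) hkn
  rw [hzk, hy]
  simp only [hblk_eq n k (le_trans ha1 hka) hkn, hsub_eq n i k hka hkb]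
  rw [List.getD_eq_getElem _ _ hilen]
  have hgi : ((Fc n).sort (· ≤ ·))[i]'hilen = Encodable.encode L :=
    List.getElem_idxOf hilen
  rw [hgi, Encodable.encodek]
  have hkL : k < L.length := by rw [hL, List.length_ofFn]; exact hkn
  rw [Option.getD_some, List.getD_eq_getElem _ _ hkL]
  simp [hL]
end

section
/- If F is a remote filter of clopen subsets of ω × 2^ω in the ground model and P is a nwd-bounding forcing notion, then F remains a remote filter of clopen subsets of ω × 2^ω in the generic extension: it is forced that every nowhere dense subset of ω × 2^ω is disjoint from some member of F. -/
/-- `P` is nwd-bounding (for the space `ω × 2^ω`): for every condition `p` and every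
name `Ṅ` for a nowhere dense subset of `ω × 2^ω`, there are a ground-model closed
nowhere dense set `M` and `q ≤ p` forcing `Ṅ ⊆ M`. -/
def NwdBounding (𝔽 : ForcingNotion) : Prop :=
  ∀ (A : {G // G ∈ 𝔽.Generic} → Set (ℕ × (ℕ → Bool))) (p : 𝔽.P),
    (∀ G : {G // G ∈ 𝔽.Generic}, p ∈ G.1 → interior (closure (A G)) = ∅) →
    ∃ M : Set (ℕ × (ℕ → Bool)), IsClosed M ∧ interior M = ∅ ∧
      ∃ q : 𝔽.P, 𝔽.le q p ∧ ∀ G : {G // G ∈ 𝔽.Generic}, q ∈ G.1 → A G ⊆ M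

/-- A filter `F` of clopen subsets of `ω × 2^ω` is remote if every nowhere dense subset
of `ω × 2^ω` is disjoint from some member of `F`. -/
def IsRemoteClopenFilter (F : Set (Set (ℕ × (ℕ → Bool)))) : Prop :=
  (∀ U ∈ F, IsClopen U) ∧ (∅ ∉ F) ∧
  (∀ U ∈ F, ∀ V ∈ F, ∃ W ∈ F, W ⊆ U ∩ V) ∧
  (∀ N : Set (ℕ × (ℕ → Bool)), interior (closure N) = ∅ → ∃ U ∈ F, U ∩ N = ∅)

/-- If `F` is a remote filter of clopen subsets of `ω × 2^ω` in the ground model and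
`P` is nwd-bounding, then `F` remains remote in the extension: for every name `Ṅ` for
a nowhere dense subset of `ω × 2^ω` and every condition `p` forcing `Ṅ` nowhere dense,
there are `q ≤ p` and `U ∈ F` with `q` forcing `Ṅ ∩ U = ∅`. -/
theorem remote_filter_preserved (𝔽 : ForcingNotion) (hnwd : NwdBounding 𝔽)
    (F : Set (Set (ℕ × (ℕ → Bool)))) (hF : IsRemoteClopenFilter F) :
    ∀ (N : {G // G ∈ 𝔽.Generic} → Set (ℕ × (ℕ → Bool))) (p : 𝔽.P),
      (∀ G : {G // G ∈ 𝔽.Generic}, p ∈ G.1 → interior (closure (N G)) = ∅) →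
      ∃ q : 𝔽.P, 𝔽.le q p ∧ ∃ U ∈ F,
        ∀ G : {G // G ∈ 𝔽.Generic}, q ∈ G.1 → N G ∩ U = ∅ := by
  intro N p hp
  obtain ⟨M, hMc, hMi, q, hqp, hq⟩ := hnwd N p hp
  obtain ⟨U, hUF, hUM⟩ := hF.2.2.2 M (by rw [hMc.closure_eq]; exact hMi)
  refine ⟨q, hqp, U, hUF, fun G hG => ?_⟩
  have hsub : N G ∩ U ⊆ M ∩ U := Set.inter_subset_inter_left U (hq G hG)
  rw [Set.inter_comm] at hUM
  exact Set.eq_empty_of_subset_empty (hUM ▸ hsub)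
end

section
/- Every countable regular space of weight strictly less than cov(M) is discretely generated. -/
open TopologicalSpace Cardinal Set

/-- A space is discretely generated if every point in the closure of a set `A` is in the
closure of a discrete subset of `A`. -/
def DiscretelyGenerated (X : Type*) [TopologicalSpace X] : Prop :=
  ∀ (A : Set X) (p : X), p ∈ closure A →
    ∃ D : Set X, D ⊆ A ∧ DiscreteTopology D ∧ p ∈ closure D

namespace CovAux

variable {P : Type} (le : P → P → Prop) (e : ℕ → P)

open Classical in
noncomputable def chain (f : ℕ → ℕ) : ℕ → P
  | 0 => e (f 0)
  | n+1 => if le (e (f (n+1))) (chain f n) then e (f (n+1)) else chain f n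

lemma chain_congr {f g : ℕ → ℕ} (n : ℕ) (h : ∀ i ≤ n, f i = g i) :
    chain le e f n = chain le e g n := by
  induction n with
  | zero => simp [chain, h 0 (le_refl 0)]
  | succ n ih =>
      have h1 : ∀ i ≤ n, f i = g i := fun i hi => h i (hi.trans (Nat.le_succ n))
      simp only [chain]
      rw [h (n+1) le_rfl, ih h1]

lemma chain_le (hrefl : ∀ p, le p p) (htrans : ∀ a b c, le a b → le b c → le a c)
    (f : ℕ → ℕ) {n m : ℕ} (h : n ≤ m) : le (chain le e f m) (chain le e f n) := by
  induction m with
  | zero => simpa [Nat.le_zero.mp h] using hrefl _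
  | succ m ih =>
      rcases Nat.lt_or_ge n (m+1) with hl | hg
      · have h2 := ih (Nat.lt_succ_iff.mp hl)
        by_cases hc : le (e (f (m+1))) (chain le e f m)
        · simpa [chain, hc] using htrans _ _ _ hc h2
        · simpa [chain, hc] using h2
      · have : n = m+1 := le_antisymm h hg
        subst this; exact hrefl _

theorem ma (P : Type) [Countable P] [Nonempty P] (le : P → P → Prop)
    (hrefl : ∀ p, le p p) (htrans : ∀ a b c, le a b → le b c → le a c)
    (ι : Type) (Dn : ι → Set P)
    (hdense : ∀ i q, ∃ r, r ∈ Dn i ∧ le r q) (hcard : #ι < covMeager) :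
    ∃ q : ℕ → P, (∀ m n, n ≤ m → le (q m) (q n)) ∧ ∀ i, ∃ n, q n ∈ Dn i := by
  obtain ⟨e, he⟩ := exists_surjective_nat P
  set Bad : ι → Set (ℕ → ℕ) := fun i => {f | ∀ n, chain le e f n ∉ Dn i} with hBad
  -- each Bad i is nowhere dense
  have hnd : ∀ i, IsNowhereDense (Bad i) := by
    intro i
    rw [IsNowhereDense, eq_empty_iff_forall_notMem]
    intro f hf
    obtain ⟨I, u, hu, hI⟩ := isOpen_pi_iff.mp isOpen_interior f hf
    set N : ℕ := if h : I.Nonempty then (I.max' h) + 1 else 0 with hN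
    have hIN : ∀ a ∈ I, a < N := by
      intro a ha
      have : I.Nonempty := ⟨a, ha⟩
      simp only [hN, dif_pos this]
      exact Nat.lt_succ_of_le (I.le_max' a ha)
    -- choose r ∈ Dn i below the chain (or anything if N = 0)
    have hkey : ∃ g : ℕ → ℕ, (∀ k < N, g k = f k) ∧ chain le e g N ∈ Dn i := by
      rcases Nat.eq_zero_or_pos N with h0 | hpos
      · obtain ⟨r, hr, -⟩ := hdense i (e 0)
        obtain ⟨m, hm⟩ := he r
        refine ⟨fun _ => m, by omega, ?_⟩
        simp [h0, chain, hm, hr]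
      · obtain ⟨r, hr, hrle⟩ := hdense i (chain le e f (N-1))
        obtain ⟨m, hm⟩ := he r
        set g : ℕ → ℕ := fun k => if k < N then f k else m with hg
        have hgf : ∀ k < N, g k = f k := fun k hk => by simp [hg, hk]
        have hcc : chain le e g (N-1) = chain le e f (N-1) :=
          chain_congr le e _ (fun k hk => hgf k (by omega))
        refine ⟨g, hgf, ?_⟩
        have hNg : g N = m := by simp [hg]
        obtain ⟨N', hN'⟩ : ∃ N', N = N' + 1 := ⟨N-1, by omega⟩
        have hle : le (e (g N)) (chain le e g N') := by
          rw [hNg, hm]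
          have : N' = N - 1 := by omega
          rw [this, hcc]; exact hrle
        rw [hN']
        have hle' : le (e (g (N'+1))) (chain le e g N') := hN' ▸ hle
        simp only [chain, hle', if_true]
        rw [show g (N'+1) = m from hN' ▸ hNg, hm]; exact hr
    obtain ⟨g, hgf, hgD⟩ := hkey
    -- g is in the cylinder around f, hence in closure (Bad i)
    have hgmem : g ∈ closure (Bad i) := by
      refine interior_subset (hI ?_)
      intro a ha
      rw [hgf a (hIN a ha)]
      exact (hu a ha).2
    -- but the cylinder of length N+1 around g misses Bad i
    have : ∃ h ∈ {h : ℕ → ℕ | ∀ k ≤ N, h k = g k}, h ∈ Bad i := by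
      rw [mem_closure_iff] at hgmem
      have hop : IsOpen {h : ℕ → ℕ | ∀ k ≤ N, h k = g k} := by
        have : {h : ℕ → ℕ | ∀ k ≤ N, h k = g k} =
            ⋂ k ∈ Finset.range (N+1), (fun h : ℕ → ℕ => h k) ⁻¹' {g k} := by
          ext h; simp [Nat.lt_succ_iff]
        rw [this]
        exact isOpen_biInter_finset fun k _ => (continuous_apply k).isOpen_preimage _ trivial
      obtain ⟨h, hh1, hh2⟩ := hgmem _ hop (fun k _ => rfl)
      exact ⟨h, hh1, hh2⟩
    obtain ⟨h, hh1, hh2⟩ := this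
    have : chain le e h N = chain le e g N := chain_congr le e _ (fun k hk => hh1 k hk)
    exact hh2 N (this ▸ hgD)
  have hmg : ∀ i, IsMeagre (Bad i) :=
    fun i => isMeagre_iff_countable_union_isNowhereDense.mpr
      ⟨{Bad i}, by simpa using hnd i, countable_singleton _, by simp⟩
  have hcov : ∃ f : ℕ → ℕ, ∀ i, f ∉ Bad i := by
    by_contra hcon
    push_neg at hcon
    have hG : ⋃₀ (Set.range Bad) = Set.univ := by
      ext f
      simp only [mem_sUnion, mem_range, mem_univ, iff_true]
      obtain ⟨i, hi⟩ := hcon f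
      exact ⟨Bad i, ⟨i, rfl⟩, hi⟩
    have hmem : #(Set.range Bad) ∈ { c | ∃ G : Set (Set (ℕ → ℕ)), (∀ A ∈ G, IsMeagre A) ∧
        ⋃₀ G = Set.univ ∧ #G = c } := by
      refine ⟨Set.range Bad, ?_, hG, rfl⟩
      rintro A ⟨i, rfl⟩
      exact hmg i
    have h1 : covMeager ≤ #(Set.range Bad) := csInf_le' hmem
    exact absurd (h1.trans mk_range_le) (not_le.mpr hcard)
  obtain ⟨f, hf⟩ := hcov
  refine ⟨chain le e f, fun m n h => chain_le le e hrefl htrans f h, fun i => ?_⟩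
  have := hf i
  simp only [hBad, mem_setOf_eq, not_forall, not_not] at this
  exact this

end CovAux

theorem main
    (X : Type) [TopologicalSpace X] [Countable X] [T3Space X]
    (B : Set (Set X)) (hB : IsTopologicalBasis B) (hBw : #B < covMeager) :
    ∀ (A : Set X) (p : X), p ∈ closure A →
    ∃ D : Set X, D ⊆ A ∧ DiscreteTopology D ∧ p ∈ closure D := by
  classical
  intro A p hp
  by_cases hpA : p ∈ A
  · exact ⟨{p}, singleton_subset_iff.mpr hpA, inferInstance, subset_closure rfl⟩
  -- choose basic neighborhoods whose closures avoid given finite sets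
  have key : ∀ (d : X) (S : Finset X), ∃ U : Set X, d ∉ (S : Set X) →
      U ∈ B ∧ d ∈ U ∧ ∀ x ∈ (S : Set X), x ∉ closure U := by
    intro d S
    by_cases h : d ∈ (S : Set X)
    · exact ⟨∅, fun hd => absurd h hd⟩
    · have hSc : IsClosed (S : Set X) := S.finite_toSet.isClosed
      have hmem : (S : Set X)ᶜ ∈ nhds d := hSc.isOpen_compl.mem_nhds h
      obtain ⟨t, ht, htc, hts⟩ := exists_mem_nhds_isClosed_subset hmem
      obtain ⟨V, hVt, hVo, hdV⟩ := mem_nhds_iff.mp ht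
      obtain ⟨U, hUB, hdU, hUV⟩ := hB.exists_subset_of_mem_open hdV hVo
      refine ⟨U, fun _ => ⟨hUB, hdU, fun x hx hxc => ?_⟩⟩
      have : closure U ⊆ t := htc.closure_subset_iff.mpr (hUV.trans hVt)
      exact hts (this hxc) hx
  choose nb hnb using key
  -- the countable poset
  set Cond : Finset (X × Finset X) → Prop := fun c => ∀ q ∈ c, q.1 ∈ A ∧ p ∈ q.2 ∧
      q.1 ∉ (q.2 : Set X) ∧ ∀ q' ∈ c, q'.1 ∈ nb q.1 q.2 → q'.1 = q.1 with hCond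
  let P : Type := {c : Finset (X × Finset X) // Cond c}
  have hPne : Nonempty P := ⟨⟨∅, fun q hq => absurd hq (Finset.notMem_empty q)⟩⟩
  let lp : P → P → Prop := fun c₁ c₂ => c₂.1 ⊆ c₁.1
  let ι : Type := ↥{U ∈ B | p ∈ U}
  let Dn : ι → Set P := fun U => {c : P | ∃ s ∈ c.1, s.1 ∈ U.1}
  have hcard : #ι < covMeager := lt_of_le_of_lt (mk_le_mk_of_subset (sep_subset _ _)) hBw
  have hdense : ∀ i c, ∃ r, r ∈ Dn i ∧ lp r c := by
    rintro ⟨U, hUB, hpU⟩ ⟨c, hc⟩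
    -- the finite union of closures of chosen neighborhoods
    have hpT : ∀ s ∈ c, p ∉ closure (nb s.1 s.2) := by
      intro s hs
      obtain ⟨-, hps, hns, -⟩ := hc s hs
      exact (hnb s.1 s.2 hns).2.2 p hps
    set W : Set X := U ∩ (⋃ s ∈ (c : Set (X × Finset X)), closure (nb s.1 s.2))ᶜ with hW
    have hWo : IsOpen W := (hB.isOpen hUB).inter
      (c.finite_toSet.isClosed_biUnion fun s _ => isClosed_closure).isOpen_compl
    have hpW : p ∈ W := by
      refine ⟨hpU, fun hmem => ?_⟩
      obtain ⟨s, hs, hcl⟩ := Set.mem_iUnion₂.mp hmem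
      exact hpT s hs hcl
    obtain ⟨a, haW, haA⟩ := mem_closure_iff.mp hp W hWo hpW
    have haU : a ∈ U := haW.1
    have haT : ∀ s ∈ c, a ∉ closure (nb s.1 s.2) :=
      fun s hs hcl => haW.2 (Set.mem_iUnion₂.mpr ⟨s, hs, hcl⟩)
    have hap : a ≠ p := fun h => hpA (h ▸ haA)
    set Sa : Finset X := insert p (c.image Prod.fst) with hSa
    have haSa : a ∉ (Sa : Set X) := by
      simp only [hSa, Finset.coe_insert, Set.mem_insert_iff, Finset.coe_image,
        Set.mem_image, Finset.mem_coe, not_or]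
      refine ⟨hap, ?_⟩
      rintro ⟨s, hs, rfl⟩
      obtain ⟨-, -, hns, -⟩ := hc s hs
      exact haT s hs (subset_closure (hnb s.1 s.2 hns).2.1)
    have hcond' : Cond (insert (a, Sa) c) := by
      intro q hq
      rcases Finset.mem_insert.mp hq with hq | hq
      · subst hq
        refine ⟨haA, by simp [hSa], haSa, ?_⟩
        intro q' hq' hq'n
        rcases Finset.mem_insert.mp hq' with h | h
        · rw [h]
        · exfalso
          have hq'Sa : q'.1 ∈ (Sa : Set X) := by
            simp only [hSa, Finset.coe_insert, Set.mem_insert_iff]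
            exact Or.inr (Finset.mem_coe.mpr (Finset.mem_image_of_mem Prod.fst h))
          exact (hnb a Sa haSa).2.2 q'.1 hq'Sa (subset_closure hq'n)
      · obtain ⟨h1, h2, h3, h4⟩ := hc q hq
        refine ⟨h1, h2, h3, ?_⟩
        intro q' hq' hq'n
        rcases Finset.mem_insert.mp hq' with h | h
        · have ha' : a ∈ nb q.1 q.2 := by rw [h] at hq'n; exact hq'n
          exact absurd (subset_closure ha') (haT q hq)
        · exact h4 q' h hq'n
    exact ⟨⟨insert (a, Sa) c, hcond'⟩, ⟨(a, Sa), Finset.mem_insert_self _ _, haU⟩,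
      Finset.subset_insert _ _⟩
  obtain ⟨q, hqchain, hqhit⟩ := CovAux.ma P lp (fun c => subset_rfl)
    (fun a b c h1 h2 => h2.trans h1) ι Dn hdense hcard
  set D : Set X := {x | ∃ n S, (x, S) ∈ (q n).1} with hD
  refine ⟨D, ?_, ?_, ?_⟩
  · intro x hx
    obtain ⟨n, S, hS⟩ := hx
    exact ((q n).2 (x, S) hS).1
  · rw [discreteTopology_iff_isOpen_singleton]
    rintro ⟨x, hx⟩
    obtain ⟨n, S, hS⟩ := hx
    obtain ⟨-, -, hxS, -⟩ := (q n).2 (x, S) hS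
    have hsub : Subtype.val ⁻¹' (nb x S) = ({⟨x, ⟨n, S, hS⟩⟩} : Set D) := by
      ext ⟨y, hy⟩
      simp only [Set.mem_preimage, Set.mem_singleton_iff, Subtype.mk.injEq]
      constructor
      · intro hyn
        obtain ⟨m, S', hS'⟩ := hy
        have hk1 : (q n).1 ⊆ (q (max n m)).1 := hqchain (max n m) n (le_max_left _ _)
        have hk2 : (q m).1 ⊆ (q (max n m)).1 := hqchain (max n m) m (le_max_right _ _)
        exact ((q (max n m)).2 (x, S) (hk1 hS)).2.2.2 (y, S') (hk2 hS') hyn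
      · rintro rfl
        exact (hnb _ _ hxS).2.1
    rw [← hsub]
    exact (hB.isOpen (hnb x S hxS).1).preimage continuous_subtype_val
  · rw [mem_closure_iff]
    intro V hVo hpV
    obtain ⟨U, hUB, hpU, hUV⟩ := hB.exists_subset_of_mem_open hpV hVo
    obtain ⟨n, s, hs, hsU⟩ := hqhit ⟨U, hUB, hpU⟩
    exact ⟨s.1, hUV hsU, n, s.2, hs⟩

/-- Every countable regular space of weight strictly less than `cov(M)` is discretely
generated. -/
theorem countable_regular_small_weight_discretely_generated
    (X : Type) [TopologicalSpace X] [Countable X] [T3Space X]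
    (B : Set (Set X)) (hB : IsTopologicalBasis B) (hBw : #B < covMeager) :
    DiscretelyGenerated X := fun A p hp =>
  main X B hB hBw A p hp
end

section
/- Let κ < min{non(M), d} and for each α < κ let f_α be a function with infinite domain dom(f_α) ⊆ ω into ω. Suppose that for each n, the values f_α(n) arise as ranks in an increasing chain of closed nowhere dense sets. Then there is f : ω → ω such that for all α < κ and m < ω there is n ∈ dom(f_α) with n ≥ m and f_α(n) < f(n). -/
open Cardinal Filter

/-- (van Douwen) Given fewer than `min{non(M), d}` partial functions `f_α` with
infinite domains `dom(f_α) ⊆ ω`, there is a single `f : ω → ω` such that for every `α`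
and every `m` there is `n ∈ dom(f_α)` with `n ≥ m` and `f_α n < f n`. -/
theorem exists_function_exceeding_cofinally
    (ι : Type) (hι : #ι < min nonMeager domNumber)
    (E : ι → Set ℕ) (hE : ∀ i, (E i).Infinite)
    (f : ι → ℕ → ℕ) :
    ∃ g : ℕ → ℕ, ∀ (i : ι) (m : ℕ), ∃ n ∈ E i, m ≤ n ∧ f i n < g n := by
  classical
  have hd : #ι < domNumber := lt_of_lt_of_le hι (min_le_right _ _)
  -- the "next element of `E i`" function
  set e : ι → ℕ → ℕ := fun i n => sInf {a | a ∈ E i ∧ n ≤ a} with he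
  have hne : ∀ i n, {a | a ∈ E i ∧ n ≤ a}.Nonempty := by
    intro i n
    obtain ⟨a, ha, hna⟩ := (hE i).exists_gt n
    exact ⟨a, ha, le_of_lt hna⟩
  have heE : ∀ i n, e i n ∈ E i ∧ n ≤ e i n := fun i n => Nat.sInf_mem (hne i n)
  set G : ι → ℕ → ℕ := fun i n => max (e i n) (f i (e i n)) with hG
  -- the family `G i` is not dominating since `#ι < 𝔡`
  have hex : ∃ h : ℕ → ℕ, ∀ i, ¬ ∀ᶠ n in atTop, h n ≤ G i n := by
    by_contra hc
    push_neg at hc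
    have hdom : ∀ f0 : ℕ → ℕ, ∃ g ∈ Set.range G, ∀ᶠ n in atTop, f0 n ≤ g n := by
      intro f0
      obtain ⟨i, hi⟩ := hc f0
      exact ⟨G i, ⟨i, rfl⟩, hi⟩
    have h1 : domNumber ≤ #(Set.range G) :=
      csInf_le' ⟨Set.range G, hdom, rfl⟩
    exact absurd (h1.trans Cardinal.mk_range_le) hd.not_ge
  obtain ⟨h, hh⟩ := hex
  -- monotone majorant of `h`
  refine ⟨fun n => (Finset.range (n + 1)).sup h, ?_⟩
  intro i m
  have hfreq : ∃ n, m ≤ n ∧ G i n < h n := by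
    have := hh i
    rw [Filter.not_eventually] at this
    obtain ⟨n, hn, hlt⟩ := (frequently_atTop.mp this) m
    exact ⟨n, hn, lt_of_not_ge hlt⟩
  obtain ⟨n, hmn, hGn⟩ := hfreq
  obtain ⟨haE, hna⟩ := heE i n
  refine ⟨e i n, haE, le_trans hmn hna, ?_⟩
  have h1 : f i (e i n) ≤ G i n := le_max_right _ _
  have h2 : h n ≤ (Finset.range (e i n + 1)).sup h := by
    apply Finset.le_sup
    exact Finset.mem_range.mpr (Nat.lt_succ_of_le hna)
  exact lt_of_le_of_lt h1 (lt_of_lt_of_le hGn h2)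
end
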